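/- arXiv:1410.1184 — 8 statements merged into one kernel-verified Lean document; each statement's English description precedes it below -/
import Mathlib

section
/- Let p ≥ 1, ρ > 0, and let Y be a p×p complex Hermitian matrix with spectral decomposition Y = V D V^H, where V is unitary and D = diag(d_1,…,d_p) contains the (real) eigenvalues of Y. Define d̃_i := min{ ( -d_i + √(d_i² + 4ρ) ) / (2ρ), 1 } for i ∈ [p] and X* := V diag(d̃_1,…,d̃_p) V^H. Then X* is Hermitian with 0 ≺ X* ⪯ I, and for every Hermitian p×p matrix X with 0 ≺ X ⪯ I it holds that -log det X* + Re tr(Y X*) + (ρ/2)‖X*‖_F² ≤ -log det X + Re tr(Y X) + (ρ/2)‖X‖_F². (This is the closed-form X-update of the ADMM algorithm, Proposition 1, first part, stated for a single frequency bin.) -/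
open Matrix
open scoped ComplexOrder

/-- Squared Frobenius norm of a single complex matrix. -/
noncomputable def frobSq {p : ℕ} (M : Matrix (Fin p) (Fin p) ℂ) : ℝ :=
  ∑ i, ∑ j, ‖M i j‖ ^ 2

/-- The norm ‖X_{i,j}[·]‖ of the (i,j) entry group of a matrix sequence. -/
noncomputable def entryNorm {p F : ℕ} (X : Fin F → Matrix (Fin p) (Fin p) ℂ)
    (i j : Fin p) : ℝ :=
  Real.sqrt ((1 / (F : ℝ)) * ∑ f, ‖X f i j‖ ^ 2)

/-- The ℓ₁-norm ‖X‖₁ of a matrix sequence. -/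
noncomputable def l1Norm {p F : ℕ} (X : Fin F → Matrix (Fin p) (Fin p) ℂ) : ℝ :=
  ∑ i, ∑ j, entryNorm X i j

/-- The inner product ⟨A[·],B[·]⟩ (real part). -/
noncomputable def seqInner {p F : ℕ} (A B : Fin F → Matrix (Fin p) (Fin p) ℂ) : ℝ :=
  (1 / (F : ℝ)) * ∑ f, ((A f * B f).trace).re

/-- A{X} = (1/F) ∑_f log det X[f]. -/
noncomputable def Afun {p F : ℕ} (X : Fin F → Matrix (Fin p) (Fin p) ℂ) : ℝ :=
  (1 / (F : ℝ)) * ∑ f, Real.log (((X f).det).re)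

/-- The constraint set 𝒞: sequences of Hermitian matrices with 0 ≺ X[f] ⪯ I. -/
def memC {p F : ℕ} (X : Fin F → Matrix (Fin p) (Fin p) ℂ) : Prop :=
  ∀ f, (X f).IsHermitian ∧ (X f).PosDef ∧
    ((1 : Matrix (Fin p) (Fin p) ℂ) - X f).PosSemidef

/-- The gLASSO objective J(X) = -A{X} + ⟨Ŝ,X⟩ + λ‖X‖₁. -/
noncomputable def glassoObj {p F : ℕ} (Shat : Fin F → Matrix (Fin p) (Fin p) ℂ)
    (lam : ℝ) (X : Fin F → Matrix (Fin p) (Fin p) ℂ) : ℝ :=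
  - Afun X + seqInner Shat X + lam * l1Norm X

-- X_𝒮[·]: the sequence restricted to the index set 𝒮.
open Classical in
noncomputable def restrictSeq {p F : ℕ} (S : Set (Fin p × Fin p))
    (X : Fin F → Matrix (Fin p) (Fin p) ℂ) : Fin F → Matrix (Fin p) (Fin p) ℂ :=
  fun f => Matrix.of fun i j => if (i, j) ∈ S then X f i j else 0

/-- Generalized support of a matrix sequence. -/
def gsupp {p F : ℕ} (X : Fin F → Matrix (Fin p) (Fin p) ℂ) : Set (Fin p × Fin p) :=
  {ij | ∃ f, X f ij.1 ij.2 ≠ 0}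


section MyAux
variable {p : ℕ}

private lemma my_scalar_key (ρ d : ℝ) (hρ : 0 < ρ)
    (t : ℝ) (ht : t = min ((-d + Real.sqrt (d ^ 2 + 4 * ρ)) / (2 * ρ)) 1)
    (z : ℝ) (hz1 : z ≤ 1) :
    0 ≤ -(z/t) + 1 + d * (z - t) + ρ/2 * (z^2 - t^2) := by
  set s := Real.sqrt (d ^ 2 + 4 * ρ) with hs
  have hs0 : 0 ≤ s := Real.sqrt_nonneg _
  have hs2 : s ^ 2 = d ^ 2 + 4 * ρ := Real.sq_sqrt (by positivity)
  have hsd : |d| < s := by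
    by_contra h
    push_neg at h
    have h1 : s * s ≤ |d| * s := mul_le_mul_of_nonneg_right h hs0
    have h2 : |d| * s ≤ |d| * |d| := mul_le_mul_of_nonneg_left h (abs_nonneg d)
    nlinarith [sq_abs d]
  have hsd1 : -d < s := lt_of_le_of_lt (neg_le_abs d) hsd
  have hsd2 : d < s := lt_of_le_of_lt (le_abs_self d) hsd
  set r := (-d + s) / (2 * ρ) with hr
  have hr0 : 0 < r := by
    apply div_pos (by linarith) (by linarith)
  have hroot : ρ * r ^ 2 + d * r = 1 := by
    rw [hr]; field_simp; nlinarith [hs2]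
  have hrρ : ρ * r = (s - d) / 2 := by rw [hr]; field_simp; ring
  have ht0 : 0 < t := by rw [ht]; exact lt_min hr0 one_pos
  have ht1 : t ≤ 1 := by rw [ht]; exact min_le_right _ _
  have key : 0 ≤ (z - t) * (d + ρ * t - 1 / t) := by
    rcases le_or_gt r 1 with hcase | hcase
    · have htr : t = r := by rw [ht]; exact min_eq_left hcase
      have : d + ρ * t - 1 / t = 0 := by
        rw [htr]
        field_simp
        nlinarith [hroot]
      rw [this, mul_zero]
    · have htr : t = 1 := by rw [ht]; exact min_eq_right hcase.le
      have hc : d + ρ * t - 1 / t ≤ 0 := by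
        rw [htr]
        have hpos : 0 < d + ρ + ρ * r := by rw [hrρ]; linarith
        nlinarith [hroot]
      have := mul_nonneg (show (0:ℝ) ≤ t - z by rw [htr]; linarith)
        (show (0:ℝ) ≤ -(d + ρ * t - 1 / t) by linarith)
      nlinarith
  have expand : -(z/t) + 1 + d * (z - t) + ρ/2 * (z^2 - t^2)
      = (z - t) * (d + ρ * t - 1 / t) + ρ/2 * (z - t)^2 := by
    field_simp
    ring
  rw [expand]
  nlinarith [sq_nonneg (z - t)]

private lemma my_dt_pos (ρ d : ℝ) (hρ : 0 < ρ) :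
    0 < min ((-d + Real.sqrt (d ^ 2 + 4 * ρ)) / (2 * ρ)) 1 := by
  have hs0 : 0 ≤ Real.sqrt (d ^ 2 + 4 * ρ) := Real.sqrt_nonneg _
  have hs2 : Real.sqrt (d ^ 2 + 4 * ρ) ^ 2 = d ^ 2 + 4 * ρ := Real.sq_sqrt (by positivity)
  have hsd : |d| < Real.sqrt (d ^ 2 + 4 * ρ) := by
    by_contra h
    push_neg at h
    have h1 := mul_le_mul_of_nonneg_right h hs0
    have h2 := mul_le_mul_of_nonneg_left h (abs_nonneg d)
    nlinarith [sq_abs d]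
  have hsd2 : d < Real.sqrt (d ^ 2 + 4 * ρ) := lt_of_le_of_lt (le_abs_self d) hsd
  exact lt_min (div_pos (by linarith) (by linarith)) one_pos

private lemma my_unitary_star_mul {V : Matrix (Fin p) (Fin p) ℂ}
    (hV : V ∈ Matrix.unitaryGroup (Fin p) ℂ) : Vᴴ * V = 1 := by
  rw [← Matrix.star_eq_conjTranspose]
  exact Matrix.mem_unitaryGroup_iff'.mp hV

private lemma my_unitary_mul_star {V : Matrix (Fin p) (Fin p) ℂ}
    (hV : V ∈ Matrix.unitaryGroup (Fin p) ℂ) : V * Vᴴ = 1 := by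
  rw [← Matrix.star_eq_conjTranspose]
  exact Matrix.mem_unitaryGroup_iff.mp hV

private lemma my_posDef_conj_unit {A B : Matrix (Fin p) (Fin p) ℂ} (hA : A.PosDef)
    (hB : IsUnit B) : (Bᴴ * A * B).PosDef := by
  exact hA.conjTranspose_mul_mul_same (Matrix.mulVec_injective_iff_isUnit.mpr hB)

private lemma my_posDef_conj {A : Matrix (Fin p) (Fin p) ℂ} (hA : A.PosDef)
    {V : Matrix (Fin p) (Fin p) ℂ} (hV : V ∈ Matrix.unitaryGroup (Fin p) ℂ) :
    (Vᴴ * A * V).PosDef := by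
  refine my_posDef_conj_unit hA ?_
  apply (Matrix.isUnit_iff_isUnit_det V).mpr
  have h := congrArg Matrix.det (my_unitary_star_mul hV)
  rw [Matrix.det_mul, Matrix.det_one] at h
  exact IsUnit.of_mul_eq_one _ ((mul_comm V.det Vᴴ.det).trans h)

private lemma my_psd_diag_re_nonneg {W : Matrix (Fin p) (Fin p) ℂ} (hW : W.PosSemidef)
    (i : Fin p) : 0 ≤ (W i i).re := by
  have h := hW.diag_nonneg (i := i)
  exact (Complex.le_def.mp h).1

private lemma my_posdef_diag_re_pos {Z : Matrix (Fin p) (Fin p) ℂ} (hZ : Z.PosDef)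
    (i : Fin p) : 0 < (Z i i).re := by
  have h := hZ.diag_pos (i := i)
  exact (Complex.lt_def.mp h).1

private lemma my_trace_eig {N : Matrix (Fin p) (Fin p) ℂ} (hN : N.IsHermitian) :
    N.trace = ∑ i, (hN.eigenvalues i : ℂ) := by
  exact hN.trace_eq_sum_eigenvalues

private lemma my_det_le_exp {N : Matrix (Fin p) (Fin p) ℂ} (hN : N.PosDef) :
    N.det.re ≤ Real.exp (N.trace.re - p) := by
  have hH := hN.isHermitian
  have hdet : N.det = (∏ i, (hH.eigenvalues i : ℂ)) := hH.det_eq_prod_eigenvalues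
  have htr : N.trace = ∑ i, (hH.eigenvalues i : ℂ) := my_trace_eig hH
  have hdre : N.det.re = ∏ i, hH.eigenvalues i := by
    rw [hdet, ← Complex.ofReal_prod, Complex.ofReal_re]
  have htre : N.trace.re = ∑ i, hH.eigenvalues i := by
    rw [htr, ← Complex.ofReal_sum, Complex.ofReal_re]
  rw [hdre, htre]
  calc ∏ i, hH.eigenvalues i ≤ ∏ i, Real.exp (hH.eigenvalues i - 1) := by
        apply Finset.prod_le_prod
        · intro i _; exact (hN.eigenvalues_pos i).le
        · intro i _
          have := Real.add_one_le_exp (hH.eigenvalues i - 1)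
          linarith
    _ = Real.exp (∑ i, (hH.eigenvalues i - 1)) := by rw [Real.exp_sum]
    _ = Real.exp ((∑ i, hH.eigenvalues i) - p) := by
        congr 1; rw [Finset.sum_sub_distrib]; simp

private lemma my_det_conj {X V : Matrix (Fin p) (Fin p) ℂ}
    (hV : V ∈ Matrix.unitaryGroup (Fin p) ℂ) :
    (Vᴴ * X * V).det = X.det := by
  have h1 : Vᴴ.det * V.det = 1 := by
    rw [← Matrix.det_mul, my_unitary_star_mul hV, Matrix.det_one]
  rw [Matrix.det_mul, Matrix.det_mul]
  calc Vᴴ.det * X.det * V.det = (Vᴴ.det * V.det) * X.det := by ring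
    _ = X.det := by rw [h1, one_mul]

private lemma my_trace_mul_diag (M : Matrix (Fin p) (Fin p) ℂ) (f : Fin p → ℂ) :
    (M * Matrix.diagonal f).trace = ∑ i, M i i * f i := by
  simp [Matrix.trace, Matrix.diag, Matrix.mul_diagonal]

end MyAux

section MyAux2
variable {p : ℕ}

private lemma my_frobSq_eq_trace (M : Matrix (Fin p) (Fin p) ℂ) :
    frobSq M = ((Mᴴ * M).trace).re := by
  unfold frobSq
  rw [Matrix.trace]
  simp only [Matrix.diag, Matrix.mul_apply, Matrix.conjTranspose_apply, Complex.re_sum]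
  rw [Finset.sum_comm]
  refine Finset.sum_congr rfl fun i _ => Finset.sum_congr rfl fun j _ => ?_
  rw [Complex.sq_norm, Complex.normSq_apply]
  simp [Complex.mul_re]

private lemma my_frobSq_conj {X V : Matrix (Fin p) (Fin p) ℂ}
    (hV : V ∈ Matrix.unitaryGroup (Fin p) ℂ) :
    frobSq (Vᴴ * X * V) = frobSq X := by
  rw [my_frobSq_eq_trace, my_frobSq_eq_trace]
  congr 1
  have hs : (Vᴴ * X * V)ᴴ * (Vᴴ * X * V) = Vᴴ * (Xᴴ * X) * V := by
    simp only [Matrix.conjTranspose_mul, Matrix.conjTranspose_conjTranspose, Matrix.mul_assoc]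
    rw [show V * (Vᴴ * (X * V)) = X * V from by
      rw [← Matrix.mul_assoc, my_unitary_mul_star hV, Matrix.one_mul]]
  rw [hs, Matrix.trace_mul_cycle, ← Matrix.mul_assoc, my_unitary_mul_star hV, Matrix.one_mul]

end MyAux2

theorem stmt_0 (p : ℕ) (hp : 1 ≤ p) (ρ : ℝ) (hρ : 0 < ρ)
    (Y V : Matrix (Fin p) (Fin p) ℂ) (d : Fin p → ℝ)
    (hV : V ∈ Matrix.unitaryGroup (Fin p) ℂ)
    (hY : Y = V * Matrix.diagonal (fun i => (d i : ℂ)) * Vᴴ)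
    (dt : Fin p → ℝ)
    (hdt : ∀ i, dt i = min ((-(d i) + Real.sqrt ((d i) ^ 2 + 4 * ρ)) / (2 * ρ)) 1)
    (Xstar : Matrix (Fin p) (Fin p) ℂ)
    (hXstar : Xstar = V * Matrix.diagonal (fun i => (dt i : ℂ)) * Vᴴ) :
    Xstar.IsHermitian ∧ Xstar.PosDef ∧
      ((1 : Matrix (Fin p) (Fin p) ℂ) - Xstar).PosSemidef ∧
      ∀ X : Matrix (Fin p) (Fin p) ℂ, X.IsHermitian → X.PosDef →
        ((1 : Matrix (Fin p) (Fin p) ℂ) - X).PosSemidef →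
        - Real.log (Xstar.det.re) + ((Y * Xstar).trace).re + (ρ / 2) * frobSq Xstar ≤
          - Real.log (X.det.re) + ((Y * X).trace).re + (ρ / 2) * frobSq X := by
  have hV' : Vᴴ ∈ Matrix.unitaryGroup (Fin p) ℂ := by
    rw [← Matrix.star_eq_conjTranspose]; exact Unitary.star_mem hV
  set T : Matrix (Fin p) (Fin p) ℂ := Matrix.diagonal (fun i => (dt i : ℂ)) with hT
  have hdt0 : ∀ i, 0 < dt i := fun i => by rw [hdt i]; exact my_dt_pos ρ (d i) hρ
  have hdt1 : ∀ i, dt i ≤ 1 := fun i => by rw [hdt i]; exact min_le_right _ _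
  have hTpd : T.PosDef := Matrix.PosDef.diagonal fun i => Complex.zero_lt_real.mpr (hdt0 i)
  have hXstar' : Xstar = Vᴴᴴ * T * Vᴴ := by
    rw [Matrix.conjTranspose_conjTranspose]; exact hXstar
  have hXstarPD : Xstar.PosDef := by rw [hXstar']; exact my_posDef_conj hTpd hV'
  have hXstarH : Xstar.IsHermitian := hXstarPD.isHermitian
  have honeT : ((1 : Matrix (Fin p) (Fin p) ℂ) - T).PosSemidef := by
    have h2 : (1 : Matrix (Fin p) (Fin p) ℂ) - T
        = Matrix.diagonal (fun i => ((1 - dt i : ℝ) : ℂ)) := by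
      rw [hT, ← Matrix.diagonal_one, Matrix.diagonal_sub]
      congr 1; funext i; push_cast; ring
    rw [h2]
    exact Matrix.PosSemidef.diagonal fun i =>
      Complex.zero_le_real.mpr (by linarith [hdt1 i])
  have hXstarPSD : ((1 : Matrix (Fin p) (Fin p) ℂ) - Xstar).PosSemidef := by
    have h1 : V * ((1 : Matrix (Fin p) (Fin p) ℂ) - T) * Vᴴ
        = (1 : Matrix (Fin p) (Fin p) ℂ) - Xstar := by
      rw [hXstar, Matrix.mul_sub, Matrix.mul_one, Matrix.sub_mul, my_unitary_mul_star hV]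
    rw [← h1]
    exact honeT.mul_mul_conjTranspose_same V
  refine ⟨hXstarH, hXstarPD, hXstarPSD, ?_⟩
  intro X hXH hXPD hXPSD
  set Z : Matrix (Fin p) (Fin p) ℂ := Vᴴ * X * V with hZ
  set z : Fin p → ℝ := fun i => (Z i i).re with hzdef
  have hZPD : Z.PosDef := my_posDef_conj hXPD hV
  have hz0 : ∀ i, 0 < z i := fun i => my_posdef_diag_re_pos hZPD i
  have hZ1 : ((1 : Matrix (Fin p) (Fin p) ℂ) - Z).PosSemidef := by
    have h1 : Vᴴ * ((1 : Matrix (Fin p) (Fin p) ℂ) - X) * V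
        = (1 : Matrix (Fin p) (Fin p) ℂ) - Z := by
      rw [hZ, Matrix.mul_sub, Matrix.mul_one, Matrix.sub_mul, my_unitary_star_mul hV]
    rw [← h1]
    exact hXPSD.conjTranspose_mul_mul_same V
  have hz1 : ∀ i, z i ≤ 1 := by
    intro i
    have h := my_psd_diag_re_nonneg hZ1 i
    simp only [Matrix.sub_apply, Matrix.one_apply_eq, Complex.sub_re, Complex.one_re] at h
    simp only [hzdef]
    linarith
  have hdetX : X.det = Z.det := (my_det_conj hV).symm
  have htraceW : ∀ W : Matrix (Fin p) (Fin p) ℂ,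
      (Y * W).trace = ∑ i, (Vᴴ * W * V) i i * (d i : ℂ) := by
    intro W
    rw [hY, Matrix.mul_assoc (V * Matrix.diagonal (fun i => (d i : ℂ))) Vᴴ W,
      Matrix.trace_mul_cycle V (Matrix.diagonal (fun i => (d i : ℂ))) (Vᴴ * W),
      my_trace_mul_diag]
  have htrX : ((Y * X).trace).re = ∑ i, d i * z i := by
    rw [htraceW X, Complex.re_sum]
    refine Finset.sum_congr rfl fun i _ => ?_
    rw [← hZ]
    simp only [hzdef, Complex.mul_re, Complex.ofReal_re, Complex.ofReal_im, mul_zero, sub_zero]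
    ring
  have hXstarT : Vᴴ * Xstar * V = T := by
    rw [hXstar]
    simp only [Matrix.mul_assoc]
    rw [my_unitary_star_mul hV, Matrix.mul_one, ← Matrix.mul_assoc,
      my_unitary_star_mul hV, Matrix.one_mul]
  have htrXstar : ((Y * Xstar).trace).re = ∑ i, d i * dt i := by
    rw [htraceW Xstar, hXstarT, Complex.re_sum]
    refine Finset.sum_congr rfl fun i _ => ?_
    rw [hT]
    simp only [Matrix.diagonal_apply_eq, ← Complex.ofReal_mul, Complex.ofReal_re]
    ring
  have hdetXstar : Xstar.det.re = ∏ i, dt i := by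
    rw [hXstar', my_det_conj hV', hT, Matrix.det_diagonal, ← Complex.ofReal_prod,
      Complex.ofReal_re]
  have hlogXstar : Real.log (Xstar.det.re) = ∑ i, Real.log (dt i) := by
    rw [hdetXstar, Real.log_prod fun i _ => (hdt0 i).ne']
  have hfrobXstar : frobSq Xstar = ∑ i, (dt i) ^ 2 := by
    have h1 : frobSq Xstar = frobSq T := by
      rw [← hXstarT, my_frobSq_conj hV]
    rw [h1, hT]
    unfold frobSq
    refine Finset.sum_congr rfl fun i _ => ?_
    rw [Finset.sum_eq_single i]
    · simp [Matrix.diagonal_apply_eq, Complex.norm_real, Real.norm_eq_abs, sq_abs]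
    · intro j _ hj
      rw [Matrix.diagonal_apply_ne _ (Ne.symm hj)]
      simp
    · intro h; exact absurd (Finset.mem_univ i) h
  have hfrobX : ∑ i, (z i) ^ 2 ≤ frobSq X := by
    rw [← my_frobSq_conj (X := X) hV, ← hZ]
    unfold frobSq
    refine Finset.sum_le_sum fun i _ => ?_
    calc (z i) ^ 2 ≤ ‖Z i i‖ ^ 2 := by
          simp only [hzdef]
          rw [Complex.sq_norm, Complex.normSq_apply]
          nlinarith [sq_nonneg (Z i i).im]
      _ ≤ ∑ j, ‖Z i j‖ ^ 2 :=
          Finset.single_le_sum (f := fun j => ‖Z i j‖ ^ 2)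
            (fun j _ => by positivity) (Finset.mem_univ i)
  -- log-det bound
  set A : Matrix (Fin p) (Fin p) ℂ :=
    Matrix.diagonal (fun i => (((Real.sqrt (dt i))⁻¹ : ℝ) : ℂ)) with hA
  have hAH : Aᴴ = A := by
    rw [hA, Matrix.diagonal_conjTranspose]
    have h : (star fun i : Fin p => (((Real.sqrt (dt i))⁻¹ : ℝ) : ℂ))
        = fun i : Fin p => (((Real.sqrt (dt i))⁻¹ : ℝ) : ℂ) := by
      funext i
      simp [Pi.star_apply, Complex.star_def, Complex.conj_ofReal]
    rw [h]
  have hs0 : ∀ i, (0:ℝ) < Real.sqrt (dt i) := fun i => Real.sqrt_pos.mpr (hdt0 i)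
  have hAunit : IsUnit A := by
    apply (Matrix.isUnit_iff_isUnit_det A).mpr
    rw [hA, Matrix.det_diagonal]
    refine (Finset.prod_ne_zero_iff.mpr fun i _ => ?_).isUnit
    exact Complex.ofReal_ne_zero.mpr (inv_ne_zero (hs0 i).ne')
  have hNpd : (A * Z * A).PosDef := by
    have h := my_posDef_conj_unit hZPD hAunit
    rwa [hAH] at h
  have hkey := my_det_le_exp hNpd
  have hNtr : ((A * Z * A).trace).re = ∑ i, (dt i)⁻¹ * z i := by
    rw [show (A * Z * A).trace = ∑ i, (A * Z * A) i i from by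
      simp [Matrix.trace, Matrix.diag]]
    rw [Complex.re_sum]
    refine Finset.sum_congr rfl fun i _ => ?_
    rw [show (A * Z * A) i i
        = (((Real.sqrt (dt i))⁻¹ : ℝ) : ℂ) * Z i i * (((Real.sqrt (dt i))⁻¹ : ℝ) : ℂ) from by
      rw [hA, Matrix.mul_diagonal, Matrix.diagonal_mul]]
    have hsq : (Real.sqrt (dt i))⁻¹ * (Real.sqrt (dt i))⁻¹ = (dt i)⁻¹ := by
      rw [← mul_inv, Real.mul_self_sqrt (hdt0 i).le]
    simp only [hzdef, Complex.mul_re, Complex.ofReal_re, Complex.ofReal_im, mul_zero, sub_zero,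
      zero_mul]
    rw [← hsq]
    ring
  set c : ℝ := ∏ i, (Real.sqrt (dt i))⁻¹ with hc
  have hNdet : (A * Z * A).det.re = c * Z.det.re * c := by
    rw [Matrix.det_mul, Matrix.det_mul, hA, Matrix.det_diagonal, ← Complex.ofReal_prod, ← hc]
    simp only [Complex.mul_re, Complex.ofReal_re, Complex.ofReal_im, mul_zero, sub_zero,
      zero_mul, Complex.mul_im, add_zero, zero_add]
  have hc2 : c * c = (∏ i, dt i)⁻¹ := by
    rw [hc, ← Finset.prod_mul_distrib, ← Finset.prod_inv_distrib]
    refine Finset.prod_congr rfl fun i _ => ?_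
    rw [← mul_inv, Real.mul_self_sqrt (hdt0 i).le]
  have hP0 : (0:ℝ) < ∏ i, dt i := Finset.prod_pos fun i _ => hdt0 i
  have hZdetpos : 0 < Z.det.re := (Complex.lt_def.mp hZPD.det_pos).1
  have hle : Z.det.re ≤ (∏ i, dt i) * Real.exp ((∑ i, (dt i)⁻¹ * z i) - p) := by
    rw [hNdet, hNtr] at hkey
    calc Z.det.re = (∏ i, dt i) * (c * Z.det.re * c) := by
          rw [show (∏ i, dt i) * (c * Z.det.re * c)
              = ((∏ i, dt i) * (c * c)) * Z.det.re from by ring, hc2,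
            mul_inv_cancel₀ hP0.ne', one_mul]
      _ ≤ (∏ i, dt i) * Real.exp ((∑ i, (dt i)⁻¹ * z i) - p) :=
          mul_le_mul_of_nonneg_left hkey hP0.le
  have hlogX : Real.log (X.det.re)
      ≤ (∑ i, Real.log (dt i)) + ((∑ i, (dt i)⁻¹ * z i) - p) := by
    rw [hdetX]
    calc Real.log (Z.det.re)
        ≤ Real.log ((∏ i, dt i) * Real.exp ((∑ i, (dt i)⁻¹ * z i) - p)) :=
          Real.log_le_log hZdetpos hle
      _ = (∑ i, Real.log (dt i)) + ((∑ i, (dt i)⁻¹ * z i) - p) := by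
          rw [Real.log_mul hP0.ne' (Real.exp_ne_zero _), Real.log_exp,
            Real.log_prod fun i _ => (hdt0 i).ne']
  -- assemble
  rw [hlogXstar, htrXstar, hfrobXstar, htrX]
  have hsum : 0 ≤ ∑ i, (-(z i / dt i) + 1 + d i * (z i - dt i)
      + ρ/2 * ((z i) ^ 2 - (dt i) ^ 2)) :=
    Finset.sum_nonneg fun i _ => my_scalar_key ρ (d i) hρ (dt i) (hdt i) (z i) (hz1 i)
  have hexp : ∑ i, (-(z i / dt i) + 1 + d i * (z i - dt i)
        + ρ/2 * ((z i) ^ 2 - (dt i) ^ 2))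
      = -(∑ i, (dt i)⁻¹ * z i) + (p : ℝ) + ((∑ i, d i * z i) - (∑ i, d i * dt i))
        + (ρ/2 * (∑ i, (z i) ^ 2) - ρ/2 * (∑ i, (dt i) ^ 2)) := by
    have e1 : ∑ i, -(z i / dt i) = -(∑ i, (dt i)⁻¹ * z i) := by
      rw [← Finset.sum_neg_distrib]
      exact Finset.sum_congr rfl fun i _ => by rw [div_eq_inv_mul]
    have e2 : ∑ _i : Fin p, (1:ℝ) = (p : ℝ) := by simp
    have e3 : ∑ i, d i * (z i - dt i) = (∑ i, d i * z i) - (∑ i, d i * dt i) := by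
      rw [← Finset.sum_sub_distrib]
      exact Finset.sum_congr rfl fun i _ => by ring
    have e4 : ∑ i, ρ/2 * ((z i) ^ 2 - (dt i) ^ 2)
        = ρ/2 * (∑ i, (z i) ^ 2) - ρ/2 * (∑ i, (dt i) ^ 2) := by
      rw [Finset.mul_sum, Finset.mul_sum, ← Finset.sum_sub_distrib]
      exact Finset.sum_congr rfl fun i _ => by ring
    rw [Finset.sum_add_distrib, Finset.sum_add_distrib, Finset.sum_add_distrib,
      e1, e2, e3, e4]
  rw [hexp] at hsum
  have hfX : ρ/2 * (∑ i, (z i) ^ 2) ≤ ρ/2 * frobSq X :=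
    mul_le_mul_of_nonneg_left hfrobX (by positivity)
  linarith [hsum, hfX, hlogX]
end

section
/- Let n ≥ 1, κ > 0 and y ∈ ℂⁿ. Define z* := (1 - κ/‖y‖)₊ · y if y ≠ 0 and z* := 0 if y = 0, where a₊ := max{a,0} and ‖·‖ is the Euclidean norm on ℂⁿ. Then for every z ∈ ℂⁿ: κ‖z*‖ + (1/2)‖z* - y‖² ≤ κ‖z‖ + (1/2)‖z - y‖². (This is the block soft-thresholding operation solving the ADMM Z-update of Proposition 1, stated for a single entry group.) -/
open Matrix
open scoped ComplexOrder

open Classical in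
/-- block soft-thresholding solves the ADMM Z-update (Prop. 1),
for a single entry group. -/
theorem stmt_1 (n : ℕ) (hn : 1 ≤ n) (κ : ℝ) (hκ : 0 < κ)
    (y zstar : EuclideanSpace ℂ (Fin n))
    (hz : zstar = if y = 0 then 0 else (max (1 - κ / ‖y‖) 0 : ℝ) • y) :
    ∀ z : EuclideanSpace ℂ (Fin n),
      κ * ‖zstar‖ + (1 / 2) * ‖zstar - y‖ ^ 2 ≤ κ * ‖z‖ + (1 / 2) * ‖z - y‖ ^ 2 := by
  intro z
  have hexp := @norm_sub_sq ℂ _ _ _ _ z y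
  have hr := re_inner_le_norm (𝕜 := ℂ) z y
  have hz0 : (0:ℝ) ≤ ‖z‖ := norm_nonneg z
  by_cases hy : y = 0
  · subst hy
    simp only [if_pos rfl] at hz
    subst hz
    simp only [norm_zero, sub_zero, mul_zero, add_zero, zero_sub, norm_neg]
    norm_num
    positivity
  · rw [if_neg hy] at hz
    have hy0 : (0:ℝ) < ‖y‖ := norm_pos_iff.mpr hy
    by_cases hk : ‖y‖ ≤ κ
    · have ht : max (1 - κ / ‖y‖) 0 = 0 := by
        apply max_eq_right
        have : κ / ‖y‖ ≥ 1 := (one_le_div hy0).mpr hk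
        linarith
      rw [ht] at hz
      simp only [zero_smul] at hz
      subst hz
      simp only [norm_zero, zero_sub, norm_neg]
      rw [hexp]
      nlinarith [sq_nonneg ‖z‖]
    · push_neg at hk
      have ht : max (1 - κ / ‖y‖) 0 = 1 - κ / ‖y‖ := by
        apply max_eq_left
        have : κ / ‖y‖ < 1 := (div_lt_one hy0).mpr hk
        linarith
      rw [ht] at hz
      have htpos : 0 < 1 - κ / ‖y‖ := by
        have : κ / ‖y‖ < 1 := (div_lt_one hy0).mpr hk
        linarith
      have hns : ‖zstar‖ = ‖y‖ - κ := by
        rw [hz, norm_smul, Real.norm_eq_abs, abs_of_pos htpos]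
        field_simp
      have hnd : ‖zstar - y‖ = κ := by
        have heq : zstar - y = (-(κ / ‖y‖) : ℝ) • y := by
          rw [hz]
          module
        rw [heq, norm_smul, Real.norm_eq_abs, abs_neg,
          abs_of_pos (div_pos hκ hy0)]
        field_simp
      rw [hns, hnd, hexp]
      nlinarith [sq_nonneg (‖z‖ - (‖y‖ - κ))]
end

section
/- Fix integers p ≥ 1, F ≥ 1, reals U ≥ 1, λ > 0, φ > 0 and an integer s ≥ 1. Let S[1],…,S[F] be p×p Hermitian matrices with I ⪯ S[f] ⪯ U·I for all f, and set K[f] := S[f]⁻¹. Let 𝒮 := gsupp(K[·]) and assume |𝒮| ≤ s. Assume the compatibility condition: for every sequence X[·] of p×p Hermitian matrices with ‖X_{𝒮^c}‖₁ ≤ 3‖X_𝒮‖₁ one has (1/F) ∑_{f=1}^F ‖S[f]^{1/2} X[f] S[f]^{1/2}‖_F² ≥ (φ/s)‖X_𝒮‖₁². Let Ŝ[1],…,Ŝ[F] be p×p Hermitian matrices with max_{f} max_{i,j} |S[f]_{i,j} - Ŝ[f]_{i,j}| ≤ λ/2. If K̂[·] ∈ 𝒞 minimizes the gLASSO objective J(X)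 := -A{X} + ⟨Ŝ[·],X[·]⟩ + λ‖X‖₁ over 𝒞, then ‖K̂ - K‖₁ ≤ 96 (2U+1)² (s/φ) λ. (This is the key deterministic error bound, inequality (22) of the paper.) -/
open Matrix
open scoped ComplexOrder

/-- The positive semidefinite square root of a PSD matrix (the old Mathlib `Matrix.PosSemidef.sqrt`). -/
noncomputable def psdSqrt {p : ℕ} {A : Matrix (Fin p) (Fin p) ℂ} (hA : A.PosSemidef) :
    Matrix (Fin p) (Fin p) ℂ :=
  hA.1.eigenvectorUnitary.1 * diagonal ((↑) ∘ (Real.sqrt ·) ∘ hA.1.eigenvalues) *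
    (star hA.1.eigenvectorUnitary : Matrix (Fin p) (Fin p) ℂ)

set_option maxHeartbeats 1000000

/-! ### Auxiliary lemmas -/

section Aux

open scoped Classical

variable {p F : ℕ}

lemma scalar_log_bound {U x : ℝ} (hU : 1 ≤ U) (hx : 0 < x) (hxU : x ≤ U) :
    Real.log x ≤ (x - 1) - (x - 1)^2 / (2*U) := by
  have hU0 : (0:ℝ) < U := lt_of_lt_of_le one_pos hU
  set g : ℝ → ℝ := fun t => t - 1 - (t-1)^2/(2*U) - Real.log t with hg
  have hderiv : ∀ t : ℝ, 0 < t → HasDerivAt g (1 - (t-1)/U - 1/t) t := by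
    intro t ht
    have h1 : HasDerivAt (fun t : ℝ => t - 1) 1 t := (hasDerivAt_id t).sub_const 1
    have h2 : HasDerivAt (fun t : ℝ => (t-1)^2) (2*(t-1)) t := by
      have := h1.fun_pow 2
      simpa using this
    have h3 : HasDerivAt (fun t : ℝ => (t-1)^2/(2*U)) (2*(t-1)/(2*U)) t := h2.div_const _
    have h4 : HasDerivAt Real.log (1/t) t := by
      simpa [one_div] using Real.hasDerivAt_log (ne_of_gt ht)
    have : HasDerivAt g (1 - 2*(t-1)/(2*U) - 1/t) t := (h1.fun_sub h3).fun_sub h4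
    convert this using 1
    field_simp
  have key : 0 ≤ g x := by
    rcases le_total x 1 with hx1 | hx1
    · have : AntitoneOn g (Set.Icc x 1) := by
        apply antitoneOn_of_deriv_nonpos (convex_Icc x 1)
        · apply ContinuousOn.sub
          · apply ContinuousOn.sub
            · fun_prop
            · fun_prop
          · apply Real.continuousOn_log.mono
            intro t ht
            simp only [Set.mem_Icc] at ht
            simp only [Set.mem_compl_iff, Set.mem_singleton_iff]
            exact ne_of_gt (lt_of_lt_of_le hx ht.1)
        · intro t ht
          rw [interior_Icc] at ht
          exact ((hderiv t (lt_trans hx ht.1)).differentiableAt).differentiableWithinAt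
        · intro t ht
          rw [interior_Icc] at ht
          have ht0 : 0 < t := lt_trans hx ht.1
          rw [(hderiv t ht0).deriv]
          have h1 : t - 1 < 0 := by linarith [ht.2]
          have : 1 - (t-1)/U - 1/t = (t-1)*(U-t)/(U*t) := by field_simp; ring
          rw [this]
          apply div_nonpos_of_nonpos_of_nonneg
          · apply mul_nonpos_of_nonpos_of_nonneg (le_of_lt h1)
            have : t < U := lt_of_lt_of_le ht.2 hU
            linarith
          · positivity
      have := this (Set.mem_Icc.2 ⟨le_refl x, hx1⟩) (Set.mem_Icc.2 ⟨hx1, le_refl 1⟩) hx1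
      simpa [hg, Real.log_one] using this
    · have : MonotoneOn g (Set.Icc 1 U) := by
        apply monotoneOn_of_deriv_nonneg (convex_Icc 1 U)
        · apply ContinuousOn.sub
          · apply ContinuousOn.sub
            · fun_prop
            · fun_prop
          · apply Real.continuousOn_log.mono
            intro t ht
            simp only [Set.mem_Icc] at ht
            simp only [Set.mem_compl_iff, Set.mem_singleton_iff]
            exact ne_of_gt (lt_of_lt_of_le one_pos ht.1)
        · intro t ht
          rw [interior_Icc] at ht
          exact ((hderiv t (lt_trans one_pos ht.1)).differentiableAt).differentiableWithinAt
        · intro t ht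
          rw [interior_Icc] at ht
          have ht0 : 0 < t := lt_trans one_pos ht.1
          rw [(hderiv t ht0).deriv]
          have : 1 - (t-1)/U - 1/t = (t-1)*(U-t)/(U*t) := by field_simp; ring
          rw [this]
          apply div_nonneg
          · apply mul_nonneg <;> linarith [ht.1, ht.2]
          · positivity
      have := this (Set.mem_Icc.2 ⟨le_refl 1, hU⟩) (Set.mem_Icc.2 ⟨hx1, hxU⟩) hx1
      simpa [hg, Real.log_one] using this
  simp only [hg] at key
  linarith

lemma trace_eq_sum_eigen {A : Matrix (Fin p) (Fin p) ℂ} (hA : A.IsHermitian) :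
    A.trace = ∑ i, (hA.eigenvalues i : ℂ) := by
  conv_lhs => rw [hA.spectral_theorem, Unitary.conjStarAlgAut_apply]
  rw [trace_mul_cycle, Matrix.mem_unitaryGroup_iff'.mp hA.eigenvectorUnitary.2,
    one_mul, trace_diagonal]
  rfl

lemma trace_sq_eq_sum_eigen_sq {A : Matrix (Fin p) (Fin p) ℂ} (hA : A.IsHermitian) :
    (A * A).trace = ∑ i, ((hA.eigenvalues i : ℂ))^2 := by
  have hu := Matrix.mem_unitaryGroup_iff'.mp hA.eigenvectorUnitary.2
  set V : Matrix (Fin p) (Fin p) ℂ := (hA.eigenvectorUnitary : Matrix (Fin p) (Fin p) ℂ)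
  set D : Matrix (Fin p) (Fin p) ℂ := diagonal (RCLike.ofReal ∘ hA.eigenvalues)
  have h2 : (V*D*(star V))*(V*D*(star V)) = V*(D*D)*(star V) := by
    calc (V*D*star V)*(V*D*star V) = V*(D*((star V*V)*(D*star V))) := by
          simp only [Matrix.mul_assoc]
      _ = V*(D*D)*star V := by rw [hu]; simp only [Matrix.one_mul, Matrix.mul_assoc]
  conv_lhs => rw [hA.spectral_theorem, Unitary.conjStarAlgAut_apply]
  rw [h2, trace_mul_cycle, ← Matrix.mul_assoc, hu, one_mul, diagonal_mul_diagonal, trace_diagonal]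
  simp [sq]

lemma entry_re_star_mul (z : ℂ) : (star z * z).re = ‖z‖ ^ 2 := by
  rw [mul_comm, Complex.star_def, Complex.mul_conj]
  simp [Complex.normSq_eq_norm_sq, ← Complex.ofReal_pow]

lemma frobSq_eq_re_trace_sq {A : Matrix (Fin p) (Fin p) ℂ} (hA : A.IsHermitian) :
    frobSq A = ((A * A).trace).re := by
  rw [frobSq, Matrix.trace, Complex.re_sum, Finset.sum_comm]
  apply Finset.sum_congr rfl
  intro j _
  rw [Matrix.diag, Matrix.mul_apply, Complex.re_sum]
  apply Finset.sum_congr rfl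
  intro i _
  have hji : A j i = star (A i j) := by
    rw [← hA.apply j i]
  rw [hji, entry_re_star_mul]

lemma eigen_le_of_bound {U : ℝ} {P : Matrix (Fin p) (Fin p) ℂ} (hP : P.IsHermitian)
    (hPU : (((U:ℂ) • 1 : Matrix (Fin p) (Fin p) ℂ) - P).PosSemidef) (i : Fin p) :
    hP.eigenvalues i ≤ U := by
  set v := hP.eigenvectorBasis i with hv
  have h1 : (inner ℂ v v : ℂ) = 1 := by
    rw [inner_self_eq_norm_sq_to_K, hP.eigenvectorBasis.orthonormal.1 i]
    norm_num
  have hnorm : star (⇑v) ⬝ᵥ (⇑v) = 1 := by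
    rw [← h1, EuclideanSpace.inner_eq_star_dotProduct, dotProduct_comm]
  have hmv : P *ᵥ ⇑v = (hP.eigenvalues i : ℂ) • ⇑v := by
    simpa using hP.mulVec_eigenvectorBasis i
  have key := hPU.dotProduct_mulVec_nonneg (⇑v)
  rw [sub_mulVec, dotProduct_sub, smul_mulVec, one_mulVec, dotProduct_smul, hnorm, hmv,
    dotProduct_smul, hnorm] at key
  simp only [smul_eq_mul, mul_one] at key
  rw [Complex.le_def] at key
  simp only [Complex.zero_re, Complex.sub_re, Complex.ofReal_re] at key
  linarith [key.1]

lemma logdet_bound {U : ℝ} (hU : 1 ≤ U) {P : Matrix (Fin p) (Fin p) ℂ}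
    (hP : P.PosDef) (hPU : (((U:ℂ) • 1 : Matrix (Fin p) (Fin p) ℂ) - P).PosSemidef) :
    Real.log (P.det.re) ≤ ((P - 1).trace).re - frobSq (P - 1) / (2*U) := by
  set μ := hP.1.eigenvalues with hμ
  have hpos : ∀ i, 0 < μ i := hP.eigenvalues_pos
  have hle : ∀ i, μ i ≤ U := fun i => eigen_le_of_bound hP.1 hPU i
  have hdet : P.det.re = ∏ i, μ i := by
    have h := hP.1.det_eq_prod_eigenvalues
    rw [← hμ] at h
    rw [h]
    norm_cast
  have hlogdet : Real.log (P.det.re) = ∑ i, Real.log (μ i) := by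
    rw [hdet, Real.log_prod (fun i _ => ne_of_gt (hpos i))]
  have htr : ((P - 1).trace).re = (∑ i, μ i) - p := by
    rw [trace_sub, trace_one, trace_eq_sum_eigen hP.1]
    simp [Complex.re_sum]
    rfl
  have hherm1 : (P - (1 : Matrix (Fin p) (Fin p) ℂ)).IsHermitian := hP.1.sub isHermitian_one
  have hexp : (P - 1) * (P - 1) = P * P - P - P + 1 := by
    simp [Matrix.mul_sub, Matrix.sub_mul, Matrix.mul_one, Matrix.one_mul]
    abel
  have hfrob : frobSq (P - 1) = ∑ i, (μ i - 1)^2 := by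
    rw [frobSq_eq_re_trace_sq hherm1, hexp]
    rw [trace_add, trace_sub, trace_sub, trace_one, trace_sq_eq_sum_eigen_sq hP.1,
      trace_eq_sum_eigen hP.1]
    simp only [Complex.add_re, Complex.sub_re, Complex.re_sum, Complex.natCast_re]
    have : ∀ i : Fin p, (((μ i : ℂ))^2).re = (μ i)^2 := by
      intro i
      rw [← Complex.ofReal_pow, Complex.ofReal_re]
    simp only [this, Complex.ofReal_re, ← hμ]
    simp only [sub_sq, one_pow, mul_one, Finset.sum_add_distrib, Finset.sum_sub_distrib,
      Finset.sum_const, Finset.card_univ, Fintype.card_fin, nsmul_eq_mul, mul_one,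
      ← Finset.mul_sum]
    ring
  rw [hlogdet, htr, hfrob]
  have hsum : ∑ i, Real.log (μ i) ≤ ∑ i, ((μ i - 1) - (μ i - 1)^2/(2*U)) :=
    Finset.sum_le_sum fun i _ => scalar_log_bound hU (hpos i) (hle i)
  calc ∑ i, Real.log (μ i) ≤ ∑ i, ((μ i - 1) - (μ i - 1)^2/(2*U)) := hsum
    _ = ((∑ i, μ i) - p) - (∑ i, (μ i - 1)^2) / (2*U) := by
        rw [Finset.sum_sub_distrib, Finset.sum_sub_distrib, ← Finset.sum_div]
        simp [Finset.sum_const, Finset.card_univ]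

lemma posSemidef_psdSqrt {A : Matrix (Fin p) (Fin p) ℂ} (hA : A.PosSemidef) :
    (psdSqrt hA).PosSemidef := by
  have hD : (diagonal ((↑) ∘ (Real.sqrt ·) ∘ hA.1.eigenvalues) :
      Matrix (Fin p) (Fin p) ℂ).PosSemidef := by
    apply PosSemidef.diagonal
    intro i
    simp only [Pi.zero_apply, Function.comp_apply]
    exact Complex.zero_le_real.mpr (Real.sqrt_nonneg _)
  have h := hD.mul_mul_conjTranspose_same (hA.1.eigenvectorUnitary : Matrix (Fin p) (Fin p) ℂ)
  unfold psdSqrt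
  rw [Matrix.star_eq_conjTranspose]
  exact h

lemma psdSqrt_mul_self {A : Matrix (Fin p) (Fin p) ℂ} (hA : A.PosSemidef) :
    psdSqrt hA * psdSqrt hA = A := by
  unfold psdSqrt
  set V : Matrix (Fin p) (Fin p) ℂ := (hA.1.eigenvectorUnitary : Matrix (Fin p) (Fin p) ℂ) with hV
  set D : Matrix (Fin p) (Fin p) ℂ := diagonal ((↑) ∘ (Real.sqrt ·) ∘ hA.1.eigenvalues) with hDdef
  have hu : star V * V = 1 := Matrix.mem_unitaryGroup_iff'.mp hA.1.eigenvectorUnitary.2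
  have e : V * D * star V * (V * D * star V) = V * (D * D) * star V := by
    calc V * D * star V * (V * D * star V) = V * (D * ((star V * V) * (D * star V))) := by
          simp only [Matrix.mul_assoc]
      _ = V * (D * D) * star V := by rw [hu]; simp only [Matrix.one_mul, Matrix.mul_assoc]
  rw [e, hDdef, diagonal_mul_diagonal]
  conv_rhs => rw [hA.1.spectral_theorem, Unitary.conjStarAlgAut_apply]
  congr 2
  refine congrArg diagonal (funext fun i => ?_)
  simp only [Function.comp_apply]
  rw [← Complex.ofReal_mul, Real.mul_self_sqrt (hA.eigenvalues_nonneg i)]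
  rfl

lemma det_sqrt_isUnit {A : Matrix (Fin p) (Fin p) ℂ} (hA : A.PosSemidef)
    (hdet : IsUnit A.det) : IsUnit (psdSqrt hA).det := by
  have h : psdSqrt hA * psdSqrt hA = A := psdSqrt_mul_self hA
  have hd : (psdSqrt hA).det * (psdSqrt hA).det = A.det := by rw [← det_mul, h]
  have : (psdSqrt hA).det ≠ 0 := fun hc => by
    rw [← hd, hc, mul_zero] at hdet; exact (not_isUnit_zero hdet)
  exact this.isUnit

lemma sqrt_mul_inv_mul_sqrt {A : Matrix (Fin p) (Fin p) ℂ} (hA : A.PosSemidef)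
    (hdet : IsUnit A.det) : psdSqrt hA * A⁻¹ * psdSqrt hA = 1 := by
  set T := psdSqrt hA with hT
  have h : T * T = A := psdSqrt_mul_self hA
  have hTdet : IsUnit T.det := det_sqrt_isUnit hA hdet
  rw [← h, Matrix.mul_inv_rev]
  calc T * (T⁻¹ * T⁻¹) * T = (T * T⁻¹) * (T⁻¹ * T) := by simp only [Matrix.mul_assoc]
    _ = 1 := by rw [Matrix.mul_nonsing_inv _ hTdet, Matrix.nonsing_inv_mul _ hTdet, one_mul]

lemma posDef_conj_of_isUnit {B T : Matrix (Fin p) (Fin p) ℂ} (hB : B.PosDef)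
    (hT : T.IsHermitian) (hdet : IsUnit T.det) : (T * B * T).PosDef := by
  have hTunit : IsUnit T := (Matrix.isUnit_iff_isUnit_det T).mpr hdet
  have hinj := Matrix.mulVec_injective_iff_isUnit.mpr hTunit
  refine Matrix.PosDef.of_dotProduct_mulVec_pos ?_ ?_
  · have := isHermitian_conjTranspose_mul_mul T hB.1
    rwa [hT.eq] at this
  · intro x hx
    have hTx : T *ᵥ x ≠ 0 := by
      intro hc
      exact hx (hinj (by simpa using hc))
    nth_rewrite 1 [← hT.eq]
    simpa only [star_mulVec, dotProduct_mulVec, vecMul_vecMul] using hB.dotProduct_mulVec_pos hTx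

lemma logdet_diff_bound {U : ℝ} (hU : 1 ≤ U) {S B : Matrix (Fin p) (Fin p) ℂ}
    (hSpsd : S.PosSemidef) (hSlow : (S - 1).PosSemidef)
    (hSup : (((U:ℂ) • 1 : Matrix (Fin p) (Fin p) ℂ) - S).PosSemidef)
    (hB : B.PosDef) (hB1 : ((1 : Matrix (Fin p) (Fin p) ℂ) - B).PosSemidef) :
    Real.log (B.det.re) - Real.log (((S⁻¹).det.re)) ≤
      ((S * (B - S⁻¹)).trace).re - frobSq (psdSqrt hSpsd * (B - S⁻¹) * psdSqrt hSpsd) / (2*U) := by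
  have hSpd : S.PosDef := by
    have h := Matrix.PosDef.add_posSemidef Matrix.PosDef.one hSlow
    have e : (1 : Matrix (Fin p) (Fin p) ℂ) + (S - 1) = S := by abel
    rwa [e] at h
  set T := psdSqrt hSpsd with hTdef
  have hTT : T * T = S := psdSqrt_mul_self hSpsd
  have hTpsd : T.PosSemidef := posSemidef_psdSqrt hSpsd
  have hTh : T.IsHermitian := hTpsd.1
  have hSdet : IsUnit S.det := hSpd.det_pos.ne'.isUnit
  have hTdet : IsUnit T.det := det_sqrt_isUnit hSpsd hSdet
  set P := T * B * T with hPdef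
  have hPd : P.PosDef := posDef_conj_of_isUnit hB hTh hTdet
  have hTinvT : T * S⁻¹ * T = 1 := sqrt_mul_inv_mul_sqrt hSpsd hSdet
  have hSubP : S - P = T * (1 - B) * T := by
    rw [Matrix.mul_sub, Matrix.mul_one, Matrix.sub_mul, hTT, hPdef]
  have hPU : (((U:ℂ) • 1 : Matrix (Fin p) (Fin p) ℂ) - P).PosSemidef := by
    have h2 : (S - P).PosSemidef := by
      have hc := hB1.mul_mul_conjTranspose_same T
      rw [hTh.eq] at hc
      rwa [← hSubP] at hc
    have h3 := hSup.add h2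
    rwa [sub_add_sub_cancel] at h3
  have key := logdet_bound hU hPd hPU
  have hdetP : P.det = S.det * B.det := by
    rw [hPdef, det_mul, det_mul, ← hTT, det_mul]
    ring
  have hSre : S.det = ((S.det.re : ℝ) : ℂ) ∧ 0 < S.det.re := by
    have h := hSpd.det_pos
    rw [Complex.lt_def] at h
    exact ⟨Complex.ext rfl (by simp [← h.2]), by simpa using h.1⟩
  have hBre : B.det = ((B.det.re : ℝ) : ℂ) ∧ 0 < B.det.re := by
    have h := hB.det_pos
    rw [Complex.lt_def] at h
    exact ⟨Complex.ext rfl (by simp [← h.2]), by simpa using h.1⟩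
  have hPre : P.det.re = S.det.re * B.det.re := by
    rw [hdetP, hSre.1, hBre.1, ← Complex.ofReal_mul]
    simp
  have hlogP : Real.log (P.det.re) = Real.log (S.det.re) + Real.log (B.det.re) := by
    rw [hPre, Real.log_mul hSre.2.ne' hBre.2.ne']
  have hinvdet : (S⁻¹).det.re = (S.det.re)⁻¹ := by
    rw [Matrix.det_nonsing_inv, Ring.inverse_eq_inv']
    rw [show S.det = ((S.det.re : ℝ) : ℂ) from hSre.1, ← Complex.ofReal_inv]
    simp
  have hloginv : Real.log ((S⁻¹).det.re) = - Real.log (S.det.re) := by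
    rw [hinvdet, Real.log_inv]
  have htrace : (P - 1).trace = (S * (B - S⁻¹)).trace := by
    rw [trace_sub, Matrix.mul_sub, trace_sub, Matrix.mul_nonsing_inv _ hSdet, hPdef,
      trace_mul_cycle, hTT]
  have hfrob : T * (B - S⁻¹) * T = P - 1 := by
    rw [Matrix.mul_sub, Matrix.sub_mul, hTinvT, hPdef]
  rw [hfrob, ← htrace, hloginv]
  linarith [key, hlogP]

lemma sqrt_sum_triangle (a b : Fin F → ℝ) :
    Real.sqrt (∑ f, (a f + b f)^2) ≤ Real.sqrt (∑ f, (a f)^2) + Real.sqrt (∑ f, (b f)^2) := by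
  have h := norm_add_le (WithLp.toLp 2 a) (WithLp.toLp 2 b)
  rw [← WithLp.toLp_add] at h
  simp only [EuclideanSpace.norm_eq, PiLp.toLp_apply, Pi.add_apply,
    Real.norm_eq_abs, sq_abs] at h
  exact h

lemma entryNorm_nonneg (X : Fin F → Matrix (Fin p) (Fin p) ℂ) (i j : Fin p) :
    0 ≤ entryNorm X i j := Real.sqrt_nonneg _

lemma l1Norm_nonneg (X : Fin F → Matrix (Fin p) (Fin p) ℂ) : 0 ≤ l1Norm X :=
  Finset.sum_nonneg fun i _ => Finset.sum_nonneg fun j _ => entryNorm_nonneg X i j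

lemma entryNorm_restrict (S : Set (Fin p × Fin p)) (X : Fin F → Matrix (Fin p) (Fin p) ℂ)
    (i j : Fin p) :
    entryNorm (restrictSeq S X) i j = if (i, j) ∈ S then entryNorm X i j else 0 := by
  by_cases h : (i, j) ∈ S <;> simp [entryNorm, restrictSeq, h]

lemma entryNorm_eq_of_norm_eq {X Y : Fin F → Matrix (Fin p) (Fin p) ℂ} {i j : Fin p}
    (h : ∀ f, ‖X f i j‖ = ‖Y f i j‖) : entryNorm X i j = entryNorm Y i j := by
  unfold entryNorm
  congr 2
  exact Finset.sum_congr rfl fun f _ => by rw [h f]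

lemma entryNorm_zero_of (X : Fin F → Matrix (Fin p) (Fin p) ℂ) (i j : Fin p)
    (h : ∀ f, X f i j = 0) : entryNorm X i j = 0 := by
  unfold entryNorm
  simp [h]

lemma l1Norm_split (S : Set (Fin p × Fin p)) (X : Fin F → Matrix (Fin p) (Fin p) ℂ) :
    l1Norm X = l1Norm (restrictSeq S X) + l1Norm (restrictSeq Sᶜ X) := by
  unfold l1Norm
  rw [← Finset.sum_add_distrib]
  apply Finset.sum_congr rfl
  intro i _
  rw [← Finset.sum_add_distrib]
  apply Finset.sum_congr rfl
  intro j _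
  rw [entryNorm_restrict, entryNorm_restrict]
  by_cases h : (i, j) ∈ S <;> simp [h]

lemma entryNorm_triangle (X Y Z : Fin F → Matrix (Fin p) (Fin p) ℂ) (i j : Fin p)
    (h : ∀ f, Z f i j = X f i j + Y f i j) :
    entryNorm Z i j ≤ entryNorm X i j + entryNorm Y i j := by
  unfold entryNorm
  have h1 : ∀ W : Fin F → Matrix (Fin p) (Fin p) ℂ,
      Real.sqrt ((1 / (F : ℝ)) * ∑ f, ‖W f i j‖ ^ 2)
        = Real.sqrt (1 / (F : ℝ)) * Real.sqrt (∑ f, ‖W f i j‖ ^ 2) := by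
    intro W
    rw [Real.sqrt_mul (by positivity)]
  rw [h1 X, h1 Y, h1 Z, ← mul_add]
  apply mul_le_mul_of_nonneg_left _ (Real.sqrt_nonneg _)
  have step1 : Real.sqrt (∑ f, ‖Z f i j‖ ^ 2)
      ≤ Real.sqrt (∑ f, (‖X f i j‖ + ‖Y f i j‖) ^ 2) := by
    apply Real.sqrt_le_sqrt
    apply Finset.sum_le_sum
    intro f _
    have := norm_add_le (X f i j) (Y f i j)
    rw [h f]
    apply pow_le_pow_left₀ (norm_nonneg _) this
  exact step1.trans (sqrt_sum_triangle _ _)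

lemma mean_le_entryNorm (X : Fin F → Matrix (Fin p) (Fin p) ℂ) (i j : Fin p) :
    (1 / (F : ℝ)) * ∑ f, ‖X f i j‖ ≤ entryNorm X i j := by
  rcases Nat.eq_zero_or_pos F with hF | hF
  · subst hF
    simp [entryNorm]
  have hF0 : (0:ℝ) < F := by exact_mod_cast hF
  have hcs := Finset.sum_mul_sq_le_sq_mul_sq Finset.univ (fun f : Fin F => ‖X f i j‖) (fun _ => 1)
  simp only [mul_one, one_pow, Finset.sum_const, Finset.card_univ, Fintype.card_fin,
    nsmul_eq_mul, mul_one] at hcs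
  unfold entryNorm
  rw [show (1 / (F : ℝ)) * ∑ f, ‖X f i j‖ = Real.sqrt (((1 / (F : ℝ)) * ∑ f, ‖X f i j‖)^2) from
    (Real.sqrt_sq (by positivity)).symm]
  apply Real.sqrt_le_sqrt
  rw [mul_pow, div_pow, one_pow]
  calc 1 / (F:ℝ)^2 * (∑ f, ‖X f i j‖)^2 ≤ 1 / (F:ℝ)^2 * ((∑ f, ‖X f i j‖^2) * F) := by
        apply mul_le_mul_of_nonneg_left hcs (by positivity)
    _ = 1 / (F:ℝ) * ∑ f, ‖X f i j‖^2 := by field_simp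

lemma re_trace_mul_le {M N : Matrix (Fin p) (Fin p) ℂ} {c : ℝ} (hc : 0 ≤ c)
    (hM : ∀ i j, ‖M i j‖ ≤ c) :
    ((M * N).trace).re ≤ c * ∑ i, ∑ j, ‖N i j‖ := by
  calc ((M * N).trace).re ≤ ‖(M * N).trace‖ := Complex.re_le_norm _
    _ ≤ ∑ i, ‖(M * N) i i‖ := by
        rw [Matrix.trace]
        exact norm_sum_le _ _
    _ ≤ ∑ i, ∑ k, ‖M i k‖ * ‖N k i‖ := by
        apply Finset.sum_le_sum
        intro i _
        rw [Matrix.mul_apply]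
        calc ‖∑ k, M i k * N k i‖ ≤ ∑ k, ‖M i k * N k i‖ := norm_sum_le _ _
          _ = ∑ k, ‖M i k‖ * ‖N k i‖ := by simp [norm_mul]
    _ ≤ ∑ i, ∑ k, c * ‖N k i‖ := by
        apply Finset.sum_le_sum
        intro i _
        apply Finset.sum_le_sum
        intro k _
        exact mul_le_mul_of_nonneg_right (hM i k) (norm_nonneg _)
    _ = c * ∑ i, ∑ k, ‖N k i‖ := by rw [Finset.mul_sum]; simp [Finset.mul_sum]
    _ = c * ∑ i, ∑ j, ‖N i j‖ := by rw [Finset.sum_comm]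

end Aux

/-- the key deterministic error bound, inequality (22). -/
theorem stmt_2 (p F s : ℕ) (hp : 1 ≤ p) (hF : 1 ≤ F) (hs : 1 ≤ s)
    (U lam φ : ℝ) (hU : 1 ≤ U) (hlam : 0 < lam) (hφ : 0 < φ)
    (S : Fin F → Matrix (Fin p) (Fin p) ℂ)
    (hSherm : ∀ f, (S f).IsHermitian)
    (hSpsd : ∀ f, (S f).PosSemidef)
    (hSlow : ∀ f, (S f - 1).PosSemidef)
    (hSup : ∀ f, ((U : ℂ) • (1 : Matrix (Fin p) (Fin p) ℂ) - S f).PosSemidef)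
    (K : Fin F → Matrix (Fin p) (Fin p) ℂ) (hK : ∀ f, K f = (S f)⁻¹)
    (𝒮 : Set (Fin p × Fin p)) (h𝒮 : 𝒮 = gsupp K) (hcard : 𝒮.ncard ≤ s)
    (hcompat : ∀ X : Fin F → Matrix (Fin p) (Fin p) ℂ, (∀ f, (X f).IsHermitian) →
      l1Norm (restrictSeq 𝒮ᶜ X) ≤ 3 * l1Norm (restrictSeq 𝒮 X) →
      (φ / (s : ℝ)) * (l1Norm (restrictSeq 𝒮 X)) ^ 2 ≤
        (1 / (F : ℝ)) * ∑ f, frobSq (psdSqrt (hSpsd f) * X f * psdSqrt (hSpsd f)))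
    (Shat : Fin F → Matrix (Fin p) (Fin p) ℂ) (hShat : ∀ f, (Shat f).IsHermitian)
    (herr : ∀ f i j, ‖S f i j - Shat f i j‖ ≤ lam / 2)
    (Khat : Fin F → Matrix (Fin p) (Fin p) ℂ) (hKhatC : memC Khat)
    (hmin : ∀ X, memC X → glassoObj Shat lam Khat ≤ glassoObj Shat lam X) :
    l1Norm (fun f => Khat f - K f) ≤ 96 * (2 * U + 1) ^ 2 * ((s : ℝ) / φ) * lam := by
  classical
  have hF0 : (0:ℝ) < F := by exact_mod_cast Nat.lt_of_lt_of_le Nat.zero_lt_one hF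
  have hs0 : (0:ℝ) < s := by exact_mod_cast Nat.lt_of_lt_of_le Nat.zero_lt_one hs
  have hU0 : (0:ℝ) < U := lt_of_lt_of_le one_pos hU
  set Δ : Fin F → Matrix (Fin p) (Fin p) ℂ := fun f => Khat f - K f with hΔ
  have hSpd : ∀ f, (S f).PosDef := fun f => by
    have h := Matrix.PosDef.add_posSemidef Matrix.PosDef.one (hSlow f)
    have e : (1 : Matrix (Fin p) (Fin p) ℂ) + (S f - 1) = S f := by abel
    rwa [e] at h
  have hKherm : ∀ f, (K f).IsHermitian := fun f => by rw [hK f]; exact (hSherm f).inv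
  have hKpd : ∀ f, (K f).PosDef := fun f => by rw [hK f]; exact (hSpd f).inv
  have hKmem : memC K := by
    intro f
    refine ⟨hKherm f, hKpd f, ?_⟩
    have hKpsd : (K f).PosSemidef := (hKpd f).posSemidef
    set T := psdSqrt hKpsd with hTdef
    have hKdet : IsUnit (K f).det := (hKpd f).det_pos.ne'.isUnit
    have h1 : T * (K f)⁻¹ * T = 1 := sqrt_mul_inv_mul_sqrt hKpsd hKdet
    have hSdet' : IsUnit (S f).det := (hSpd f).det_pos.ne'.isUnit
    have hKinv : (K f)⁻¹ = S f := by rw [hK f, Matrix.nonsing_inv_nonsing_inv _ hSdet']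
    rw [hKinv] at h1
    have hTT : T * T = K f := psdSqrt_mul_self hKpsd
    have hTh : T.IsHermitian := (posSemidef_psdSqrt hKpsd).1
    have heq : (1 : Matrix (Fin p) (Fin p) ℂ) - K f = T * (S f - 1) * T := by
      rw [Matrix.mul_sub, Matrix.mul_one, Matrix.sub_mul, hTT, h1]
    rw [heq]
    have hc := (hSlow f).mul_mul_conjTranspose_same T
    rwa [hTh.eq] at hc
  have hΔherm : ∀ f, (Δ f).IsHermitian := fun f => ((hKhatC f).1).sub (hKherm f)
  set Q : ℝ := (1 / (F : ℝ)) * ∑ f, frobSq (psdSqrt (hSpsd f) * Δ f * psdSqrt (hSpsd f)) with hQdef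
  -- second-order log-det bound
  have hAfun : Afun Khat - Afun K ≤ seqInner S Δ - Q/(2*U) := by
    have hper : ∀ f, Real.log ((Khat f).det.re) - Real.log ((K f).det.re) ≤
        ((S f * Δ f).trace).re - frobSq (psdSqrt (hSpsd f) * Δ f * psdSqrt (hSpsd f)) / (2*U) := by
      intro f
      have h := logdet_diff_bound hU (hSpsd f) (hSlow f) (hSup f) (hKhatC f).2.1 (hKhatC f).2.2
      rw [← hK f] at h
      simpa [hΔ] using h
    have hsum := Finset.sum_le_sum (fun f (_ : f ∈ Finset.univ) => hper f)
    have hA : Afun Khat - Afun K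
        = (1/(F:ℝ)) * ∑ f, (Real.log ((Khat f).det.re) - Real.log ((K f).det.re)) := by
      unfold Afun
      rw [← mul_sub, ← Finset.sum_sub_distrib]
    have hB : seqInner S Δ - Q/(2*U)
        = (1/(F:ℝ)) * ∑ f, (((S f * Δ f).trace).re
            - frobSq (psdSqrt (hSpsd f) * Δ f * psdSqrt (hSpsd f)) / (2*U)) := by
      unfold seqInner
      rw [hQdef, Finset.sum_sub_distrib, ← Finset.sum_div, mul_sub, mul_div_assoc]
    rw [hA, hB]
    exact mul_le_mul_of_nonneg_left hsum (by positivity)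
  -- linearity of seqInner
  have hseqlin : ∀ (A : Fin F → Matrix (Fin p) (Fin p) ℂ),
      seqInner A Khat - seqInner A K = seqInner A Δ := by
    intro A
    unfold seqInner
    rw [← mul_sub, ← Finset.sum_sub_distrib]
    congr 1
    apply Finset.sum_congr rfl
    intro f _
    have : A f * Δ f = A f * Khat f - A f * K f := by
      rw [hΔ]
      exact Matrix.mul_sub _ _ _
    rw [this, trace_sub, Complex.sub_re]
  set l1s : ℝ := l1Norm (restrictSeq 𝒮 Δ) with hl1s
  set l1c : ℝ := l1Norm (restrictSeq 𝒮ᶜ Δ) with hl1c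
  have hsplit : l1Norm Δ = l1s + l1c := l1Norm_split 𝒮 Δ
  have hl1s_nonneg : 0 ≤ l1s := l1Norm_nonneg _
  have hl1c_nonneg : 0 ≤ l1c := l1Norm_nonneg _
  -- lower bound on l1 norm difference
  have hl1low : l1c - l1s ≤ l1Norm Khat - l1Norm K := by
    have hentry : ∀ i j, entryNorm (restrictSeq 𝒮ᶜ Δ) i j - entryNorm (restrictSeq 𝒮 Δ) i j
        ≤ entryNorm Khat i j - entryNorm K i j := by
      intro i j
      by_cases hmem : (i, j) ∈ 𝒮
      · rw [entryNorm_restrict, entryNorm_restrict]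
        simp only [hmem, if_true, Set.mem_compl_iff, not_true_eq_false, if_false]
        have htri : entryNorm K i j ≤ entryNorm Khat i j + entryNorm Δ i j := by
          have h1 : entryNorm K i j ≤ entryNorm Khat i j
              + entryNorm (fun f => K f - Khat f) i j := by
            apply entryNorm_triangle
            intro f
            simp [Matrix.sub_apply]
          have h2 : entryNorm (fun f => K f - Khat f) i j = entryNorm Δ i j := by
            apply entryNorm_eq_of_norm_eq
            intro f
            rw [hΔ]
            simp [Matrix.sub_apply, norm_sub_rev]
          linarith
        linarith
      · have hK0 : ∀ f, K f i j = 0 := by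
          intro f
          by_contra hne
          exact hmem (h𝒮 ▸ (⟨f, hne⟩ : (i,j) ∈ gsupp K))
        have hKnorm : entryNorm K i j = 0 := entryNorm_zero_of K i j hK0
        have hKhateq : entryNorm Khat i j = entryNorm Δ i j := by
          apply entryNorm_eq_of_norm_eq
          intro f
          rw [hΔ]
          simp [Matrix.sub_apply, hK0 f]
        rw [entryNorm_restrict, entryNorm_restrict, if_neg hmem,
          if_pos (by simpa using hmem), hKnorm, hKhateq]
    have hsum : l1c - l1s ≤ ∑ i, ∑ j, (entryNorm Khat i j - entryNorm K i j) := by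
      rw [hl1c, hl1s]
      unfold l1Norm
      rw [← Finset.sum_sub_distrib]
      apply Finset.sum_le_sum
      intro i _
      rw [← Finset.sum_sub_distrib]
      apply Finset.sum_le_sum
      intro j _
      exact hentry i j
    have : ∑ i, ∑ j, (entryNorm Khat i j - entryNorm K i j) = l1Norm Khat - l1Norm K := by
      unfold l1Norm
      rw [← Finset.sum_sub_distrib]
      apply Finset.sum_congr rfl
      intro i _
      rw [← Finset.sum_sub_distrib]
    linarith [hsum, this.le, this.ge]
  -- error term bound
  have herrbound : seqInner S Δ - seqInner Shat Δ ≤ (lam/2) * l1Norm Δ := by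
    have hlin : seqInner S Δ - seqInner Shat Δ
        = (1/(F:ℝ)) * ∑ f, (((S f - Shat f) * Δ f).trace).re := by
      unfold seqInner
      rw [← mul_sub, ← Finset.sum_sub_distrib]
      congr 1
      apply Finset.sum_congr rfl
      intro f _
      rw [Matrix.sub_mul, trace_sub, Complex.sub_re]
    rw [hlin]
    have hswap : ∑ f, ∑ i, ∑ j, ‖Δ f i j‖ = ∑ i, ∑ j, ∑ f, ‖Δ f i j‖ := by
      rw [Finset.sum_comm]
      apply Finset.sum_congr rfl
      intro i _
      rw [Finset.sum_comm]
    calc (1/(F:ℝ)) * ∑ f, (((S f - Shat f) * Δ f).trace).re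
        ≤ (1/(F:ℝ)) * ∑ f, ((lam/2) * ∑ i, ∑ j, ‖Δ f i j‖) := by
          apply mul_le_mul_of_nonneg_left _ (by positivity)
          apply Finset.sum_le_sum
          intro f _
          apply re_trace_mul_le (by linarith)
          intro i j
          rw [Matrix.sub_apply]
          exact herr f i j
      _ = (lam/2) * ∑ i, ∑ j, ((1/(F:ℝ)) * ∑ f, ‖Δ f i j‖) := by
          rw [← Finset.mul_sum, hswap]
          simp only [← Finset.mul_sum]
          ring
      _ ≤ (lam/2) * l1Norm Δ := by
          apply mul_le_mul_of_nonneg_left _ (by linarith)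
          unfold l1Norm
          apply Finset.sum_le_sum
          intro i _
          apply Finset.sum_le_sum
          intro j _
          exact mean_le_entryNorm Δ i j
  have hQ0 : 0 ≤ Q := by
    rw [hQdef]
    apply mul_nonneg (by positivity)
    apply Finset.sum_nonneg
    intro f _
    unfold frobSq
    positivity
  -- main inequality from optimality
  have hobj := hmin K hKmem
  unfold glassoObj at hobj
  have e1 := hseqlin Shat
  have hmain : Q/(2*U) + (lam/2) * l1c ≤ (3*lam/2) * l1s := by
    have h1 : seqInner Shat Δ + lam * (l1Norm Khat - l1Norm K) ≤ Afun Khat - Afun K := by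
      nlinarith [hobj, e1]
    have h2 : lam * (l1c - l1s) ≤ lam * (l1Norm Khat - l1Norm K) :=
      mul_le_mul_of_nonneg_left hl1low (le_of_lt hlam)
    nlinarith [hAfun, herrbound, hsplit, h1, h2]
  -- cone condition
  have hQdiv : 0 ≤ Q/(2*U) := div_nonneg hQ0 (by linarith)
  have hcone : l1c ≤ 3 * l1s := by
    have h := hmain
    have h2 : (lam/2) * l1c ≤ (lam/2) * (3 * l1s) := by nlinarith
    exact le_of_mul_le_mul_left h2 (by linarith)
  have hcompat' := hcompat Δ hΔherm (by rw [← hl1s, ← hl1c]; linarith)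
  rw [← hQdef] at hcompat'
  rw [← hl1s] at hcompat'
  -- Q upper bound
  have hQle : Q ≤ 3*U*lam*l1s := by
    have h1 : Q/(2*U) ≤ (3*lam/2) * l1s := by nlinarith
    have h2 : Q ≤ ((3*lam/2) * l1s) * (2*U) := by
      rw [div_le_iff₀ (by linarith : (0:ℝ) < 2*U)] at h1
      exact h1
    nlinarith
  -- bound on l1s
  have hl1s_bound : (φ/(s:ℝ)) * l1s ≤ 3*U*lam := by
    rcases eq_or_lt_of_le hl1s_nonneg with h0 | hpos
    · rw [← h0]
      simp
      positivity
    · have h1 : ((φ/(s:ℝ)) * l1s) * l1s ≤ (3*U*lam) * l1s := by nlinarith [hcompat', hQle]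
      exact le_of_mul_le_mul_right h1 hpos
  have hφs : 0 < φ/(s:ℝ) := div_pos hφ hs0
  have hl1s_final : l1s ≤ 3*U*lam*((s:ℝ)/φ) := by
    have := mul_le_mul_of_nonneg_right hl1s_bound (le_of_lt (div_pos hs0 hφ))
    calc l1s = (φ/(s:ℝ)) * l1s * ((s:ℝ)/φ) := by field_simp
      _ ≤ (3*U*lam) * ((s:ℝ)/φ) := this
      _ = 3*U*lam*((s:ℝ)/φ) := by ring
  -- conclusion
  have hfinal : l1Norm Δ ≤ 12*U*lam*((s:ℝ)/φ) := by
    calc l1Norm Δ = l1s + l1c := hsplit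
      _ ≤ 4 * l1s := by linarith
      _ ≤ 12*U*lam*((s:ℝ)/φ) := by linarith
  have hconst : 12*U*lam*((s:ℝ)/φ) ≤ 96 * (2 * U + 1) ^ 2 * ((s : ℝ) / φ) * lam := by
    have hsφpos : 0 < (s:ℝ)/φ := div_pos hs0 hφ
    have hcoef : 12*U ≤ 96 * (2*U+1)^2 := by nlinarith
    have := mul_le_mul_of_nonneg_right hcoef (le_of_lt (mul_pos hlam hsφpos))
    nlinarith [this]
  calc l1Norm Δ ≤ 12*U*lam*((s:ℝ)/φ) := hfinal
    _ ≤ 96 * (2 * U + 1) ^ 2 * ((s : ℝ) / φ) * lam := hconst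
end

section
/- Let d ∈ ℝ and ρ > 0. Define x* := min{ ( -d + √(d² + 4ρ) ) / (2ρ), 1 }. Then x* ∈ (0,1] and for every x ∈ (0,1]: -log x* + d·x* + (ρ/2)(x*)² ≤ -log x + d·x + (ρ/2)x². (Scalar optimality claim underlying the ADMM X-update in the proof of Proposition 1.) -/
open Matrix
open scoped ComplexOrder

/-- scalar optimality claim underlying the ADMM X-update. -/
theorem stmt_3 (d ρ : ℝ) (hρ : 0 < ρ)
    (xstar : ℝ) (hx : xstar = min ((-d + Real.sqrt (d ^ 2 + 4 * ρ)) / (2 * ρ)) 1) :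
    (0 < xstar ∧ xstar ≤ 1) ∧
      ∀ x : ℝ, 0 < x → x ≤ 1 →
        -Real.log xstar + d * xstar + (ρ / 2) * xstar ^ 2 ≤
          -Real.log x + d * x + (ρ / 2) * x ^ 2 := by
  set s := Real.sqrt (d ^ 2 + 4 * ρ) with hs
  have hnn : 0 ≤ d ^ 2 + 4 * ρ := by nlinarith [sq_nonneg d]
  have hs0 : 0 ≤ s := Real.sqrt_nonneg _
  have hs2 : s ^ 2 = d ^ 2 + 4 * ρ := Real.sq_sqrt hnn
  have hds : d < s := by nlinarith [sq_nonneg (s - d), sq_nonneg (s + d)]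
  set r := (-d + s) / (2 * ρ) with hr
  have hrpos : 0 < r := by
    apply div_pos (by linarith) (by linarith)
  have hreq : ρ * r ^ 2 + d * r = 1 := by
    rw [hr]
    field_simp
    nlinarith [hs2]
  have hxpos : 0 < xstar := by
    rw [hx]; exact lt_min hrpos one_pos
  have hxle : xstar ≤ 1 := by rw [hx]; exact min_le_right _ _
  refine ⟨⟨hxpos, hxle⟩, fun x hx0 hx1 => ?_⟩
  have hlog : Real.log x - Real.log xstar ≤ (x - xstar) / xstar := by
    have h := Real.log_le_sub_one_of_pos (show 0 < x / xstar from div_pos hx0 hxpos)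
    rw [Real.log_div (ne_of_gt hx0) (ne_of_gt hxpos)] at h
    have : x / xstar - 1 = (x - xstar) / xstar := by field_simp
    linarith [this ▸ h]
  rcases le_or_gt r 1 with hcase | hcase
  · have hxr : xstar = r := by rw [hx, min_eq_left hcase]
    rw [hxr] at hlog ⊢
    have key : (x - r) / r = (x - r) * (1 / r) := by ring
    have hinv : 1 / r = d + ρ * r := by
      field_simp
      nlinarith [hreq]
    have : (x - r) / r = (x - r) * (d + ρ * r) := by rw [key, hinv]
    rw [this] at hlog
    nlinarith [sq_nonneg (x - r), mul_pos hρ hrpos]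
  · have hxr : xstar = 1 := by rw [hx, min_eq_right hcase.le]
    rw [hxr] at hlog ⊢
    have hdρ : d + ρ ≤ 1 := by
      nlinarith [mul_pos hρ hrpos, hreq]
    simp only [Real.log_one] at hlog ⊢
    have hlog' : Real.log x ≤ x - 1 := by
      have := hlog; simpa using this
    nlinarith [sq_nonneg (x - 1)]
end

section
/- Fix integers p ≥ 1 and F ≥ 1, and let λ ≥ 0. Let Ŝ[1],…,Ŝ[F] be arbitrary p×p Hermitian matrices. Then the gLASSO objective J(X) := -A{X} + ⟨Ŝ[·],X[·]⟩ + λ‖X‖₁ attains its minimum on 𝒞: there exists K̂[·] ∈ 𝒞 such that J(K̂) ≤ J(X) for every X[·] ∈ 𝒞. (Existence of a minimizer of the time-series graphical LASSO problem (6).) -/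
open Matrix
open scoped ComplexOrder

section Aux

variable {p : ℕ}

lemma psd_diag_re_nonneg {M : Matrix (Fin p) (Fin p) ℂ} (hM : M.PosSemidef) (i : Fin p) :
    0 ≤ (M i i).re := by
  have h := hM.re_dotProduct_nonneg (Pi.single i 1)
  rw [← Pi.single_star, Matrix.mulVec_single_one, single_dotProduct] at h
  simpa using h

lemma diag_re_le_one {M : Matrix (Fin p) (Fin p) ℂ} (h1 : (1 - M).PosSemidef) (i : Fin p) :
    (M i i).re ≤ 1 := by
  have h := psd_diag_re_nonneg h1 i
  have he : ((1 - M) i i).re = 1 - (M i i).re := by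
    simp [Matrix.sub_apply, Matrix.one_apply_eq, Complex.sub_re]
  rw [he] at h
  linarith

lemma entry_norm_le_one {M : Matrix (Fin p) (Fin p) ℂ} (hM : M.PosSemidef)
    (h1 : (1 - M).PosSemidef) (i j : Fin p) : ‖M i j‖ ≤ 1 := by
  by_cases hij : i = j
  · subst hij
    have him : (M i i).im = 0 := by
      have h := hM.isHermitian.apply i i
      have := congrArg Complex.im h
      simp only [Complex.star_def, Complex.conj_im] at this
      linarith
    have hre : M i i = ((M i i).re : ℂ) := Complex.ext (by simp) (by simp [him])
    rw [hre, Complex.norm_real, Real.norm_eq_abs, abs_of_nonneg (psd_diag_re_nonneg hM i)]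
    exact diag_re_le_one h1 i
  · by_cases h0 : M i j = 0
    · simp [h0]
    · set c : ℝ := ‖M i j‖ with hc
      have hcpos : 0 < c := norm_pos_iff.mpr h0
      set z : ℂ := -((starRingEnd ℂ) (M i j)) / (c : ℂ) with hz
      set v : Fin p → ℂ := Pi.single i 1 + Pi.single j z with hv
      have hQ := hM.re_dotProduct_nonneg v
      have hstar : star v = Pi.single i 1 + Pi.single j ((starRingEnd ℂ) z) := by
        rw [hv, star_add, ← Pi.single_star, ← Pi.single_star]
        simp
      have hmv : M *ᵥ v = (fun k => M k i * 1) + fun k => M k j * z := by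
        rw [hv, Matrix.mulVec_add, Matrix.mulVec_single_one, Matrix.mulVec_single]
        ext k; simp [mul_comm]
      have hQval : star v ⬝ᵥ M *ᵥ v =
          M i i * 1 + M i j * z + ((starRingEnd ℂ) z * (M j i * 1) + (starRingEnd ℂ) z * (M j j * z)) := by
        rw [hstar, hmv, add_dotProduct, dotProduct_add, dotProduct_add,
          single_dotProduct, single_dotProduct, single_dotProduct,
          single_dotProduct]
        ring
      have hccubed : (c : ℂ) ≠ 0 := by
        exact_mod_cast ne_of_gt hcpos
      have hmc : M i j * (starRingEnd ℂ) (M i j) = ((c : ℂ))^2 := by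
        rw [Complex.mul_conj]
        rw [hc, Complex.normSq_eq_norm_sq]
        push_cast
        rfl
      have ht1 : M i j * z = -(c : ℂ) := by
        rw [hz]
        field_simp
        rw [hmc]
      have hji : M j i = (starRingEnd ℂ) (M i j) := by
        have := hM.isHermitian.apply j i
        rw [← this]
        rfl
      have hzc : (starRingEnd ℂ) z = -(M i j) / (c : ℂ) := by
        rw [hz, map_div₀, map_neg, RingHomInvPair.comp_apply_eq, Complex.conj_ofReal]
      have ht2 : (starRingEnd ℂ) z * (M j i * 1) = -(c : ℂ) := by
        rw [hzc, hji, mul_one]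
        field_simp
        linear_combination (-1) * hmc
      have ht3 : (starRingEnd ℂ) z * (M j j * z) = M j j := by
        have hnz : (starRingEnd ℂ) z * z = 1 := by
          rw [hzc, hz]
          field_simp
          linear_combination hmc
        calc (starRingEnd ℂ) z * (M j j * z) = M j j * ((starRingEnd ℂ) z * z) := by ring
        _ = M j j := by rw [hnz, mul_one]
      rw [hQval, ht1, ht2, ht3, mul_one] at hQ
      have hre : ((M i i + -(c:ℂ) + (-(c:ℂ) + M j j))).re
          = (M i i).re - c - c + (M j j).re := by
        simp [Complex.add_re, Complex.neg_re, Complex.ofReal_re]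
        ring
      simp only [RCLike.re_to_complex] at hQ
      rw [hre] at hQ
      have d1 := diag_re_le_one h1 i
      have d2 := diag_re_le_one h1 j
      rw [hc]
      linarith


lemma eig_le_one {M : Matrix (Fin p) (Fin p) ℂ} (hH : M.IsHermitian)
    (h1 : (1 - M).PosSemidef) (i : Fin p) : hH.eigenvalues i ≤ 1 := by
  set v : Fin p → ℂ := ⇑(hH.eigenvectorBasis i) with hv
  have h0 := h1.re_dotProduct_nonneg v
  have hvv : star v ⬝ᵥ v = 1 := by
    have h : star v ⬝ᵥ v = (inner ℂ (hH.eigenvectorBasis i) (hH.eigenvectorBasis i) : ℂ) := by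
      rw [EuclideanSpace.inner_eq_star_dotProduct, dotProduct_comm]
    rw [h, inner_self_eq_norm_sq_to_K, hH.eigenvectorBasis.orthonormal.1 i]
    norm_num
  have hsub : (1 - M) *ᵥ v = v - M *ᵥ v := by
    rw [Matrix.sub_mulVec, Matrix.one_mulVec]
  have hμ : M *ᵥ v = hH.eigenvalues i • v := hH.mulVec_eigenvectorBasis i
  rw [hsub, dotProduct_sub, hμ, dotProduct_smul, hvv] at h0
  simp only [Complex.real_smul, mul_one] at h0
  simp only [RCLike.re_to_complex] at h0
  rw [show ((1:ℂ) - (hH.eigenvalues i : ℂ)).re = 1 - hH.eigenvalues i by simp] at h0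
  linarith

lemma det_re_le_one {M : Matrix (Fin p) (Fin p) ℂ} (hM : M.PosSemidef)
    (h1 : (1 - M).PosSemidef) : (M.det).re ≤ 1 := by
  have hH := hM.isHermitian
  have hdet : M.det = ((∏ i, hH.eigenvalues i : ℝ) : ℂ) := by
    rw [hH.det_eq_prod_eigenvalues]
    push_cast
    rfl
  rw [hdet, Complex.ofReal_re]
  exact Finset.prod_le_one (fun i _ => hM.eigenvalues_nonneg i) (fun i _ => eig_le_one hH h1 i)

lemma det_re_pos {M : Matrix (Fin p) (Fin p) ℂ} (hM : M.PosDef) : 0 < (M.det).re := by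
  have := hM.det_pos
  rw [Complex.lt_def] at this
  simpa using this.1

lemma posDef_of_psd_det_ne {M : Matrix (Fin p) (Fin p) ℂ} (hM : M.PosSemidef)
    (hd : M.det ≠ 0) : M.PosDef := by
  refine posDef_iff_dotProduct_mulVec.mpr ⟨hM.isHermitian, fun x hx => ?_⟩
  have h0 : star x ⬝ᵥ M *ᵥ x ≠ 0 := by
    intro hc
    rw [hM.dotProduct_mulVec_zero_iff] at hc
    have hMx := hc
    apply hx
    have hu : IsUnit M.det := isUnit_iff_ne_zero.mpr hd
    calc x = (M⁻¹ * M) *ᵥ x := by rw [Matrix.nonsing_inv_mul M hu, Matrix.one_mulVec]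
    _ = M⁻¹ *ᵥ (M *ᵥ x) := by rw [← Matrix.mulVec_mulVec]
    _ = 0 := by rw [hMx, Matrix.mulVec_zero]
  exact lt_of_le_of_ne ((posSemidef_iff_dotProduct_mulVec.mp hM).2 x) (Ne.symm h0)

lemma isClosed_psd : IsClosed {M : Matrix (Fin p) (Fin p) ℂ | M.PosSemidef} := by
  have hset : {M : Matrix (Fin p) (Fin p) ℂ | M.PosSemidef} =
      {M : Matrix (Fin p) (Fin p) ℂ | M.IsHermitian} ∩
        ⋂ x : Fin p → ℂ, {M | 0 ≤ star x ⬝ᵥ M *ᵥ x} := by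
    ext M
    simp only [Set.mem_setOf_eq, Set.mem_inter_iff, Set.mem_iInter]
    exact ⟨fun h => ⟨h.1, (posSemidef_iff_dotProduct_mulVec.mp h).2⟩,
      fun h => posSemidef_iff_dotProduct_mulVec.mpr ⟨h.1, h.2⟩⟩
  rw [hset]
  have hcz : IsClosed {z : ℂ | 0 ≤ z} := by
    have : {z : ℂ | 0 ≤ z} = Complex.re ⁻¹' Set.Ici 0 ∩ Complex.im ⁻¹' {0} := by
      ext z
      simp [Complex.le_def, eq_comm]
    rw [this]
    exact (isClosed_Ici.preimage Complex.continuous_re).inter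
      (isClosed_singleton.preimage Complex.continuous_im)
  refine IsClosed.inter ?_ (isClosed_iInter fun x => ?_)
  · exact isClosed_eq (continuous_id.matrix_conjTranspose) continuous_id
  · exact hcz.preimage
      (continuous_const.dotProduct (continuous_id.matrix_mulVec continuous_const))

lemma box_compact (p F : ℕ) :
    IsCompact {X : Fin F → Matrix (Fin p) (Fin p) ℂ | ∀ f i j, ‖X f i j‖ ≤ 1} := by
  have h : {X : Fin F → Matrix (Fin p) (Fin p) ℂ | ∀ f i j, ‖X f i j‖ ≤ 1} =
      Set.pi Set.univ (fun _ : Fin F =>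
        (Set.pi Set.univ (fun _ : Fin p => Set.pi Set.univ (fun _ : Fin p =>
          Metric.closedBall (0:ℂ) 1)) : Set (Matrix (Fin p) (Fin p) ℂ))) := by
    ext X
    exact ⟨fun h f _ i _ j _ => by simpa using h f i j,
      fun h f i j => by simpa using h f trivial i trivial j trivial⟩
  rw [h]
  apply isCompact_univ_pi
  intro f
  apply isCompact_univ_pi
  intro i
  apply isCompact_univ_pi
  intro j
  exact isCompact_closedBall 0 1

end Aux

/-- existence of a minimizer of the time-series graphical LASSO problem (6). -/
theorem stmt_4 (p F : ℕ) (hp : 1 ≤ p) (hF : 1 ≤ F) (lam : ℝ) (hlam : 0 ≤ lam)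
    (Shat : Fin F → Matrix (Fin p) (Fin p) ℂ) (hShat : ∀ f, (Shat f).IsHermitian) :
    ∃ Khat : Fin F → Matrix (Fin p) (Fin p) ℂ, memC Khat ∧
      ∀ X, memC X → glassoObj Shat lam Khat ≤ glassoObj Shat lam X := by
  classical
  set Sb : ℝ := (1/(F:ℝ)) * ∑ f, ∑ i, ∑ j, ‖Shat f i j‖ with hSb
  set J0 : ℝ := glassoObj Shat lam (fun _ => 1) with hJ0
  set δ : ℝ := Real.exp (-((F:ℝ) * (|J0| + Sb + 1))) with hδdef
  have hFpos : (0:ℝ) < F := by exact_mod_cast Nat.lt_of_lt_of_le Nat.zero_lt_one hF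
  have hFinv : (0:ℝ) ≤ 1/F := by positivity
  have hSbnn : 0 ≤ Sb := by
    apply mul_nonneg hFinv
    apply Finset.sum_nonneg; intro f _
    apply Finset.sum_nonneg; intro i _
    exact Finset.sum_nonneg fun j _ => norm_nonneg _
  have hcoef : 0 ≤ |J0| + Sb + 1 := add_nonneg (add_nonneg (abs_nonneg _) hSbnn) zero_le_one
  have hδpos : 0 < δ := Real.exp_pos _
  have hδ1 : δ ≤ 1 := by
    rw [hδdef, Real.exp_le_one_iff]
    have : 0 ≤ (F:ℝ) * (|J0| + Sb + 1) := mul_nonneg (le_of_lt hFpos) hcoef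
    linarith
  set K : Set (Fin F → Matrix (Fin p) (Fin p) ℂ) :=
    {X | ∀ f, (X f).PosSemidef ∧ (1 - X f).PosSemidef ∧ δ ≤ ((X f).det).re} with hK
  have hclosed : IsClosed K := by
    have hrw : K = ⋂ f, (((fun X : Fin F → Matrix (Fin p) (Fin p) ℂ => X f) ⁻¹' {M | M.PosSemidef}) ∩
        ((fun X : Fin F → Matrix (Fin p) (Fin p) ℂ => 1 - X f) ⁻¹' {M | M.PosSemidef}) ∩
        ((fun X : Fin F → Matrix (Fin p) (Fin p) ℂ => ((X f).det).re) ⁻¹' Set.Ici δ)) := by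
      ext X
      simp only [hK, Set.mem_setOf_eq, Set.mem_iInter, Set.mem_inter_iff, Set.mem_preimage,
        Set.mem_Ici]
      exact forall_congr' fun f => by tauto
    rw [hrw]
    refine isClosed_iInter fun f => ?_
    refine IsClosed.inter (IsClosed.inter ?_ ?_) ?_
    · exact isClosed_psd.preimage (continuous_apply f)
    · exact isClosed_psd.preimage (continuous_const.sub (continuous_apply f))
    · exact isClosed_Ici.preimage (Complex.continuous_re.comp ((continuous_apply f).matrix_det))
  have hsubbox : K ⊆ {X | ∀ f i j, ‖X f i j‖ ≤ 1} := by
    intro X hX f i j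
    exact entry_norm_le_one (hX f).1 (hX f).2.1 i j
  have hKcpt : IsCompact K := (box_compact p F).of_isClosed_subset hclosed hsubbox
  have honeK : (fun _ : Fin F => (1 : Matrix (Fin p) (Fin p) ℂ)) ∈ K := by
    intro f
    refine ⟨Matrix.PosSemidef.one, ?_, ?_⟩
    · simpa using (Matrix.PosSemidef.zero : (0 : Matrix (Fin p) (Fin p) ℂ).PosSemidef)
    · rw [Matrix.det_one]
      simpa using hδ1
  have hKne : K.Nonempty := ⟨_, honeK⟩
  have hcont : ContinuousOn (glassoObj Shat lam) K := by
    have hc1 : Continuous (fun X : Fin F → Matrix (Fin p) (Fin p) ℂ => seqInner Shat X) := by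
      unfold seqInner
      exact continuous_const.mul (continuous_finset_sum _ fun f _ =>
        Complex.continuous_re.comp ((continuous_const.matrix_mul (continuous_apply f)).matrix_trace))
    have hc2 : Continuous (fun X : Fin F → Matrix (Fin p) (Fin p) ℂ => l1Norm X) := by
      unfold l1Norm entryNorm
      refine continuous_finset_sum _ fun i _ => continuous_finset_sum _ fun j _ =>
        Real.continuous_sqrt.comp (continuous_const.mul (continuous_finset_sum _ fun f _ => ?_))
      exact ((continuous_apply f).matrix_elem i j).norm.pow 2
    have hc3 : ContinuousOn (fun X : Fin F → Matrix (Fin p) (Fin p) ℂ => Afun X) K := by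
      unfold Afun
      refine continuousOn_const.mul ?_
      refine continuousOn_finset_sum _ fun f _ => ?_
      refine ContinuousOn.log ?_ ?_
      · exact (Complex.continuous_re.comp ((continuous_apply f).matrix_det)).continuousOn
      · exact fun X hX => ne_of_gt (lt_of_lt_of_le hδpos (hX f).2.2)
    unfold glassoObj
    exact (hc3.neg.add hc1.continuousOn).add ((continuous_const.mul hc2).continuousOn)
  obtain ⟨Khat, hKhat, hmin⟩ := hKcpt.exists_isMinOn hKne hcont
  have hminle : ∀ Y ∈ K, glassoObj Shat lam Khat ≤ glassoObj Shat lam Y :=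
    fun Y hY => (isMinOn_iff.mp hmin) Y hY
  have hKsubC : ∀ X ∈ K, memC X := by
    intro X hX f
    have hpsd := (hX f).1
    have hdge := (hX f).2.2
    have hdet : (X f).det ≠ 0 := by
      intro h
      rw [h] at hdge
      simp only [Complex.zero_re] at hdge
      linarith
    exact ⟨hpsd.isHermitian, posDef_of_psd_det_ne hpsd hdet, (hX f).2.1⟩
  refine ⟨Khat, hKsubC Khat hKhat, ?_⟩
  intro X hX
  have hXe : ∀ f i j, ‖X f i j‖ ≤ 1 :=
    fun f i j => entry_norm_le_one (hX f).2.1.posSemidef (hX f).2.2 i j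
  have hdetpos : ∀ f, 0 < ((X f).det).re := fun f => det_re_pos (hX f).2.1
  have hdetle : ∀ f, ((X f).det).re ≤ 1 :=
    fun f => det_re_le_one (hX f).2.1.posSemidef (hX f).2.2
  by_cases hall : ∀ f, δ ≤ ((X f).det).re
  · exact hminle X (fun f => ⟨(hX f).2.1.posSemidef, (hX f).2.2, hall f⟩)
  · push_neg at hall
    obtain ⟨f0, hf0⟩ := hall
    have h1 : glassoObj Shat lam Khat ≤ J0 := hminle _ honeK
    have hlognn : ∀ f, 0 ≤ -Real.log (((X f).det).re) := by
      intro f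
      have := Real.log_nonpos (le_of_lt (hdetpos f)) (hdetle f)
      linarith
    have hlog0 : (F:ℝ) * (|J0| + Sb + 1) ≤ -Real.log (((X f0).det).re) := by
      have hlt : Real.log (((X f0).det).re) < Real.log δ := Real.log_lt_log (hdetpos f0) hf0
      rw [hδdef, Real.log_exp] at hlt
      linarith
    have hA : |J0| + Sb + 1 ≤ - Afun X := by
      have hAeq : -Afun X = (1/(F:ℝ)) * ∑ f, (-Real.log (((X f).det).re)) := by
        unfold Afun
        rw [Finset.sum_neg_distrib]
        ring
      have hsum : (F:ℝ) * (|J0| + Sb + 1) ≤ ∑ f, (-Real.log (((X f).det).re)) := by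
        refine le_trans hlog0 ?_
        exact Finset.single_le_sum (f := fun f => -Real.log (((X f).det).re))
          (fun f _ => hlognn f) (Finset.mem_univ f0)
      have := mul_le_mul_of_nonneg_left hsum hFinv
      rw [hAeq]
      have heq : (1/(F:ℝ)) * ((F:ℝ) * (|J0| + Sb + 1)) = |J0| + Sb + 1 := by
        field_simp
      linarith
    have hS : -Sb ≤ seqInner Shat X := by
      have hfb : ∀ f, -(∑ i, ∑ j, ‖Shat f i j‖) ≤ ((Shat f * X f).trace).re := by
        intro f
        have habs : |((Shat f * X f).trace).re| ≤ ∑ i, ∑ j, ‖Shat f i j‖ := by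
          calc |((Shat f * X f).trace).re| ≤ ‖(Shat f * X f).trace‖ :=
                (Complex.abs_re_le_norm _)
          _ ≤ ∑ i, ‖(Shat f * X f) i i‖ := by
              rw [Matrix.trace]
              exact norm_sum_le _ _
          _ ≤ ∑ i, ∑ j, ‖Shat f i j‖ := by
              refine Finset.sum_le_sum fun i _ => ?_
              rw [Matrix.mul_apply]
              calc ‖∑ j, Shat f i j * X f j i‖ ≤ ∑ j, ‖Shat f i j * X f j i‖ :=
                    norm_sum_le _ _
              _ ≤ ∑ j, ‖Shat f i j‖ := by
                  refine Finset.sum_le_sum fun j _ => ?_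
                  rw [norm_mul]
                  exact mul_le_of_le_one_right (norm_nonneg _) (hXe f j i)
        linarith [neg_abs_le (((Shat f * X f).trace).re)]
      have hsum : ∑ f, (-(∑ i, ∑ j, ‖Shat f i j‖)) ≤ ∑ f, ((Shat f * X f).trace).re :=
        Finset.sum_le_sum fun f _ => hfb f
      have := mul_le_mul_of_nonneg_left hsum hFinv
      have heq : (1/(F:ℝ)) * ∑ f, (-(∑ i, ∑ j, ‖Shat f i j‖)) = -Sb := by
        rw [hSb, Finset.sum_neg_distrib]
        ring
      rw [heq] at this
      exact this.trans_eq rfl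
    have hL : 0 ≤ lam * l1Norm X := by
      apply mul_nonneg hlam
      unfold l1Norm entryNorm
      exact Finset.sum_nonneg fun i _ => Finset.sum_nonneg fun j _ => Real.sqrt_nonneg _
    have h2 : |J0| + 1 ≤ glassoObj Shat lam X := by
      unfold glassoObj
      linarith
    calc glassoObj Shat lam Khat ≤ J0 := h1
    _ ≤ |J0| + 1 := by linarith [le_abs_self J0]
    _ ≤ glassoObj Shat lam X := h2
end

section
/- Fix integers p ≥ 1, F ≥ 1 and a real λ > 0. Let S[1],…,S[F] be p×p Hermitian matrices with I ⪯ S[f] for all f and set K[f] := S[f]⁻¹. Let Ŝ[1],…,Ŝ[F] be p×p Hermitian matrices and set E[f] := S[f] - Ŝ[f]. If K̂[·] ∈ 𝒞 minimizes J(X) := -A{X} + ⟨Ŝ[·],X[·]⟩ + λ‖X‖₁ over 𝒞, then with Δ[·] := K̂[·] - K[·] it holds that λ‖K̂‖₁ ≤ λ‖K‖₁ + ⟨Δ[·], E[·]⟩. (Inequality (18), obtained by combining the minimality of K̂ for the empirical objective with the minimality of K for the population objective.) -/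
open Matrix
open scoped ComplexOrder

lemma trace_eq_sum_eigs {p : ℕ} {A : Matrix (Fin p) (Fin p) ℂ} (hA : A.IsHermitian) :
    A.trace = ((∑ i, hA.eigenvalues i : ℝ) : ℂ) := by
  conv_lhs => rw [hA.spectral_theorem]
  rw [Unitary.conjStarAlgAut_apply, Matrix.trace_mul_comm, ← Matrix.mul_assoc, Unitary.coe_star_mul_self, Matrix.one_mul,
    Matrix.trace_diagonal]
  push_cast
  rfl

lemma key_logdet {p : ℕ} {M : Matrix (Fin p) (Fin p) ℂ} (hM : M.PosDef) :
    Real.log M.det.re ≤ M.trace.re - p := by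
  have hdet : M.det = ((∏ i, hM.1.eigenvalues i : ℝ) : ℂ) := by
    rw [hM.1.det_eq_prod_eigenvalues]; push_cast; rfl
  have htr := trace_eq_sum_eigs hM.1
  have hpos : ∀ i, 0 < hM.1.eigenvalues i := hM.eigenvalues_pos
  rw [hdet, htr, Complex.ofReal_re, Complex.ofReal_re,
    Real.log_prod (fun i _ => (hpos i).ne')]
  have : ∑ i, Real.log (hM.1.eigenvalues i) ≤ ∑ i, (hM.1.eigenvalues i - 1) :=
    Finset.sum_le_sum fun i _ => Real.log_le_sub_one_of_pos (hpos i)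
  simpa [Finset.sum_sub_distrib] using this

lemma posdef_conj {p : ℕ} {S B : Matrix (Fin p) (Fin p) ℂ} (hS : S.PosDef)
    (hB : IsUnit B.det) : (Bᴴ * S * B).PosDef := by
  exact Matrix.PosDef.conjTranspose_mul_mul_same hS
    (Matrix.mulVec_injective_iff_isUnit.mpr ((Matrix.isUnit_iff_isUnit_det B).mpr hB))

lemma det_pos_re {p : ℕ} {M : Matrix (Fin p) (Fin p) ℂ} (hM : M.PosDef) :
    M.det = (M.det.re : ℂ) ∧ 0 < M.det.re := by
  have := hM.det_pos
  rw [Complex.lt_def] at this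
  obtain ⟨h1, h2⟩ := this
  exact ⟨by simp [Complex.ext_iff, ← h2], by simpa using h1⟩

open scoped MatrixOrder in
lemma lemA {p : ℕ} {S X : Matrix (Fin p) (Fin p) ℂ} (hS : S.PosDef) (hX : X.PosDef) :
    Real.log X.det.re - ((S * X).trace).re ≤
      Real.log ((S⁻¹).det.re) - ((S * S⁻¹).trace).re := by
  classical
  obtain ⟨hSdet, hSre⟩ := det_pos_re hS
  obtain ⟨hXdet, hXre⟩ := det_pos_re hX
  set R := CFC.sqrt X with hRdef
  have hRR : R * R = X := CFC.sqrt_mul_sqrt_self X hX.posSemidef.nonneg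
  have hRh : R.IsHermitian := (CFC.sqrt_nonneg X).posSemidef.1
  have hRdet : IsUnit R.det := by
    have h2 : R.det * R.det = X.det := by rw [← Matrix.det_mul, hRR]
    have : R.det ≠ 0 := by
      intro h
      rw [h, mul_zero] at h2
      exact hX.det_pos.ne' h2.symm
    exact isUnit_iff_ne_zero.mpr this
  set M := Rᴴ * S * R with hMdef
  have hM : M.PosDef := posdef_conj hS hRdet
  -- trace M = trace (S * X)
  have htr : M.trace = (S * X).trace := by
    rw [hMdef, hRh.eq, Matrix.trace_mul_comm, ← Matrix.mul_assoc, ← hRR,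
      Matrix.trace_mul_comm]
  -- det M = det S * det X
  have hdet : M.det = S.det * X.det := by
    rw [hMdef, Matrix.det_mul, Matrix.det_mul, hRh.eq, mul_comm, ← mul_assoc,
      ← Matrix.det_mul, hRR]
    ring
  have hkey := key_logdet hM
  rw [hdet, hSdet, hXdet, htr] at hkey
  have hre : ((S.det.re : ℂ) * (X.det.re : ℂ)).re = S.det.re * X.det.re := by
    push_cast; simp
  rw [hre, Real.log_mul hSre.ne' hXre.ne'] at hkey
  -- RHS computations
  have hSu : IsUnit S.det := isUnit_iff_ne_zero.mpr hS.det_pos.ne'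
  have hSSinv : S * S⁻¹ = 1 := Matrix.mul_nonsing_inv S hSu
  have hdetinv : (S⁻¹).det = ((S.det.re)⁻¹ : ℝ) := by
    rw [Matrix.det_nonsing_inv, Ring.inverse_eq_inv, hSdet]
    push_cast
    simp
  rw [hSSinv, Matrix.trace_one, hdetinv]
  simp only [Complex.ofReal_re]
  rw [Real.log_inv]
  have : ((Fintype.card (Fin p) : ℂ)).re = (p : ℝ) := by simp
  rw [this]
  linarith


open scoped MatrixOrder in
lemma memC_of_inv {p F : ℕ} (S : Fin F → Matrix (Fin p) (Fin p) ℂ)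
    (hSlow : ∀ f, (S f - 1).PosSemidef)
    (K : Fin F → Matrix (Fin p) (Fin p) ℂ) (hK : ∀ f, K f = (S f)⁻¹)
    (hSpd : ∀ f, (S f).PosDef) : memC K := by
  intro f
  have hKpd : (K f).PosDef := (hK f) ▸ (hSpd f).inv
  refine ⟨hKpd.1, hKpd, ?_⟩
  rw [hK f]
  set R := CFC.sqrt (S f) with hRdef
  have hRR : R * R = S f := CFC.sqrt_mul_sqrt_self (S f) (hSpd f).posSemidef.nonneg
  have hRh : R.IsHermitian := (CFC.sqrt_nonneg (S f)).posSemidef.1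
  have hRdet : IsUnit R.det := by
    have h2 : R.det * R.det = (S f).det := by rw [← Matrix.det_mul, hRR]
    refine isUnit_iff_ne_zero.mpr fun h => ?_
    rw [h, mul_zero] at h2
    exact (hSpd f).det_pos.ne' h2.symm
  have hinvh : (R⁻¹)ᴴ = R⁻¹ := by rw [Matrix.conjTranspose_nonsing_inv, hRh.eq]
  have hcalc : (R⁻¹)ᴴ * (S f - 1) * R⁻¹ = 1 - (S f)⁻¹ := by
    rw [hinvh, Matrix.mul_sub, Matrix.sub_mul, Matrix.mul_one]
    congr 1
    · rw [← hRR, show R⁻¹ * (R * R) * R⁻¹ = (R⁻¹ * R) * (R * R⁻¹) from by noncomm_ring,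
        Matrix.nonsing_inv_mul _ hRdet, Matrix.mul_nonsing_inv _ hRdet, one_mul]
    · rw [← hRR, Matrix.mul_inv_rev]
  exact hcalc ▸ ((hSlow f).conjTranspose_mul_mul_same R⁻¹)

/-- inequality (18), combining minimality of K̂ for the empirical
objective with minimality of K for the population objective. -/
theorem stmt_8 (p F : ℕ) (hp : 1 ≤ p) (hF : 1 ≤ F) (lam : ℝ) (hlam : 0 < lam)
    (S : Fin F → Matrix (Fin p) (Fin p) ℂ)
    (hSherm : ∀ f, (S f).IsHermitian)
    (hSlow : ∀ f, (S f - 1).PosSemidef)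
    (K : Fin F → Matrix (Fin p) (Fin p) ℂ) (hK : ∀ f, K f = (S f)⁻¹)
    (Shat : Fin F → Matrix (Fin p) (Fin p) ℂ) (hShat : ∀ f, (Shat f).IsHermitian)
    (E : Fin F → Matrix (Fin p) (Fin p) ℂ) (hE : ∀ f, E f = S f - Shat f)
    (Khat : Fin F → Matrix (Fin p) (Fin p) ℂ) (hKhatC : memC Khat)
    (hmin : ∀ X, memC X → glassoObj Shat lam Khat ≤ glassoObj Shat lam X) :
    lam * l1Norm Khat ≤ lam * l1Norm K + seqInner (fun f => Khat f - K f) E := by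
    classical
  have hSpd : ∀ f, (S f).PosDef := fun f => by
    have h := Matrix.PosDef.posSemidef_add (hSlow f) Matrix.PosDef.one
    simpa using h
  have hKC : memC K := memC_of_inv S hSlow K hK hSpd
  have hemp := hmin K hKC
  simp only [glassoObj] at hemp
  -- population minimality
  have hterm : ∀ f, Real.log ((Khat f).det.re) - ((S f * Khat f).trace).re ≤
      Real.log ((K f).det.re) - ((S f * K f).trace).re := fun f => by
    rw [hK f]; exact lemA (hSpd f) (hKhatC f).2.1
  have hpop : - Afun K + seqInner S K ≤ - Afun Khat + seqInner S Khat := by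
    have h1 : ∑ f, (Real.log ((Khat f).det.re) - ((S f * Khat f).trace).re) ≤
        ∑ f, (Real.log ((K f).det.re) - ((S f * K f).trace).re) :=
      Finset.sum_le_sum fun f _ => hterm f
    rw [Finset.sum_sub_distrib, Finset.sum_sub_distrib] at h1
    have hFpos : (0:ℝ) ≤ 1 / (F:ℝ) := by positivity
    have h2 := mul_le_mul_of_nonneg_left h1 hFpos
    simp only [Afun, seqInner]
    rw [mul_sub, mul_sub] at h2
    linarith
  -- inner product identity
  have hinner : seqInner (fun f => Khat f - K f) E =
      seqInner S Khat - seqInner S K + seqInner Shat K - seqInner Shat Khat := by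
    have hf : ∀ f, (((Khat f - K f) * E f).trace).re =
        ((S f * Khat f).trace).re - ((S f * K f).trace).re +
        ((Shat f * K f).trace).re - ((Shat f * Khat f).trace).re := by
      intro f
      rw [hE f]
      have e1 : (Khat f - K f) * (S f - Shat f) =
          Khat f * S f - Khat f * Shat f - (K f * S f - K f * Shat f) := by noncomm_ring
      rw [e1, Matrix.trace_sub, Matrix.trace_sub, Matrix.trace_sub,
        Matrix.trace_mul_comm (Khat f) (S f), Matrix.trace_mul_comm (Khat f) (Shat f),
        Matrix.trace_mul_comm (K f) (S f), Matrix.trace_mul_comm (K f) (Shat f)]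
      simp only [Complex.sub_re]
      ring
    simp only [seqInner]
    rw [Finset.sum_congr rfl (fun f _ => hf f)]
    simp only [Finset.sum_add_distrib, Finset.sum_sub_distrib]
    ring
  linarith
end

section
/- Let p ≥ 1, U ≥ 1, let S be a p×p Hermitian matrix with I ⪯ S ⪯ U·I, and let X be a p×p Hermitian matrix with 0 ≺ X ⪯ I. Then every eigenvalue γ of the Hermitian matrix Γ := S^{1/2}(X - S⁻¹)S^{1/2} satisfies -1 < γ ≤ 2U. (Eigenvalue localization used in the performance analysis of the gLASSO.) -/
open Matrix
open scoped ComplexOrder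

/-- The square root of a positive semidefinite matrix, as defined in Mathlib (Dec 2024). -/
noncomputable def Matrix.PosSemidef.sqrt {n : Type*} [Fintype n] [DecidableEq n] {𝕜 : Type*}
    [RCLike 𝕜] {A : Matrix n n 𝕜} (hA : A.PosSemidef) : Matrix n n 𝕜 :=
  (hA.1.eigenvectorUnitary : Matrix n n 𝕜) *
    diagonal ((RCLike.ofReal : ℝ → 𝕜) ∘ (√·) ∘ hA.1.eigenvalues) *
    (star hA.1.eigenvectorUnitary : Matrix n n 𝕜)

lemma Matrix.PosSemidef.sqrt_mul_self {n : Type*} [Fintype n] [DecidableEq n] {𝕜 : Type*}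
    [RCLike 𝕜] {A : Matrix n n 𝕜} (hA : A.PosSemidef) : hA.sqrt * hA.sqrt = A := by
  set V : Matrix n n 𝕜 := (hA.1.eigenvectorUnitary : Matrix n n 𝕜) with hVdef
  set D : Matrix n n 𝕜 := diagonal ((RCLike.ofReal : ℝ → 𝕜) ∘ (√·) ∘ hA.1.eigenvalues) with hDdef
  have hV : star V * V = 1 := Unitary.coe_star_mul_self _
  have hd : D * D = diagonal (RCLike.ofReal ∘ hA.1.eigenvalues) := by
    rw [hDdef, diagonal_mul_diagonal]
    congr 1
    funext i
    simp only [Function.comp_apply]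
    rw [← RCLike.ofReal_mul, Real.mul_self_sqrt (hA.eigenvalues_nonneg i)]
  have hs : hA.sqrt = V * D * star V := rfl
  conv_rhs => rw [hA.1.spectral_theorem, Unitary.conjStarAlgAut_apply]
  rw [hs, show V * D * star V * (V * D * star V) = V * D * (star V * V) * D * star V by
    noncomm_ring, hV, Matrix.mul_one, Matrix.mul_assoc V D D, hd]

lemma Matrix.PosSemidef.posSemidef_sqrt {n : Type*} [Fintype n] [DecidableEq n] {𝕜 : Type*}
    [RCLike 𝕜] {A : Matrix n n 𝕜} (hA : A.PosSemidef) : hA.sqrt.PosSemidef := by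
  have hD : (diagonal ((RCLike.ofReal : ℝ → 𝕜) ∘ (√·) ∘ hA.1.eigenvalues)).PosSemidef :=
    posSemidef_diagonal_iff.mpr fun i => RCLike.ofReal_nonneg.mpr (Real.sqrt_nonneg _)
  exact hD.mul_mul_conjTranspose_same (hA.1.eigenvectorUnitary : Matrix n n 𝕜)

/-- Conjugation of a positive definite matrix by an invertible Hermitian
positive definite matrix is positive definite. -/
lemma conj_posDef {p : ℕ} {Q X : Matrix (Fin p) (Fin p) ℂ}
    (hQ : Q.PosDef) (hX : X.PosDef) : (Q * X * Q).PosDef := by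
  have hQh : Qᴴ = Q := hQ.isHermitian
  refine Matrix.PosDef.of_dotProduct_mulVec_pos ?_ ?_
  · show (Q * X * Q)ᴴ = Q * X * Q
    simp [conjTranspose_mul, hQh, hX.isHermitian.eq, Matrix.mul_assoc]
  · intro x hx
    have hQx : Q *ᵥ x ≠ 0 := by
      intro h
      apply hx
      have hinj := (Matrix.mulVec_injective_iff_isUnit (K := ℂ)).mpr hQ.isUnit
      have : Q *ᵥ x = Q *ᵥ 0 := by simpa using h
      exact hinj this
    have key : star x ⬝ᵥ ((Q * X * Q) *ᵥ x) = star (Q *ᵥ x) ⬝ᵥ (X *ᵥ (Q *ᵥ x)) := by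
      rw [← Matrix.mulVec_mulVec, ← Matrix.mulVec_mulVec, star_mulVec, hQh,
        ← Matrix.dotProduct_mulVec]
    rw [key]
    exact hX.dotProduct_mulVec_pos hQx

/-- If `A + c•1` is positive definite then every eigenvalue of `A` exceeds `-c`. -/
lemma eig_lower {p : ℕ} {A : Matrix (Fin p) (Fin p) ℂ} (hA : A.IsHermitian) (c : ℝ)
    (h : (A + (c : ℂ) • 1).PosDef) (i : Fin p) : -c < hA.eigenvalues i := by
  set w : Fin p → ℂ := ⇑(hA.eigenvectorBasis i) with hw
  have hwne : w ≠ 0 := by simpa [hw] using hA.eigenvectorBasis.orthonormal.ne_zero i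
  have hnorm : star w ⬝ᵥ w = 1 := by
    have h1 : (inner (𝕜 := ℂ) (hA.eigenvectorBasis i) (hA.eigenvectorBasis i)) = (1 : ℂ) := by
      rw [inner_self_eq_norm_sq_to_K]
      simp [hA.eigenvectorBasis.orthonormal.1 i]
    rw [EuclideanSpace.inner_eq_star_dotProduct, dotProduct_comm] at h1
    exact h1
  have hmul : A *ᵥ w = (hA.eigenvalues i : ℂ) • w := by
    have h2 := hA.mulVec_eigenvectorBasis i
    rw [RCLike.real_smul_eq_coe_smul (K := ℂ)] at h2
    exact h2
  have hpos := h.dotProduct_mulVec_pos hwne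
  have hcalc : star w ⬝ᵥ ((A + (c : ℂ) • 1) *ᵥ w)
      = ((hA.eigenvalues i + c : ℝ) : ℂ) := by
    rw [Matrix.add_mulVec, dotProduct_add, hmul, Matrix.smul_mulVec,
      Matrix.one_mulVec, dotProduct_smul, dotProduct_smul, hnorm,
      smul_eq_mul, smul_eq_mul, mul_one, mul_one, Complex.ofReal_add]
  rw [hcalc] at hpos
  have : (0 : ℝ) < hA.eigenvalues i + c := by exact_mod_cast hpos
  linarith

/-- If `c•1 - A` is positive semidefinite then every eigenvalue of `A` is at most `c`. -/
lemma eig_upper {p : ℕ} {A : Matrix (Fin p) (Fin p) ℂ} (hA : A.IsHermitian) (c : ℝ)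
    (h : ((c : ℂ) • 1 - A).PosSemidef) (i : Fin p) : hA.eigenvalues i ≤ c := by
  set w : Fin p → ℂ := ⇑(hA.eigenvectorBasis i) with hw
  have hnorm : star w ⬝ᵥ w = 1 := by
    have h1 : (inner (𝕜 := ℂ) (hA.eigenvectorBasis i) (hA.eigenvectorBasis i)) = (1 : ℂ) := by
      rw [inner_self_eq_norm_sq_to_K]
      simp [hA.eigenvectorBasis.orthonormal.1 i]
    rw [EuclideanSpace.inner_eq_star_dotProduct, dotProduct_comm] at h1
    exact h1
  have hmul : A *ᵥ w = (hA.eigenvalues i : ℂ) • w := by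
    have h2 := hA.mulVec_eigenvectorBasis i
    rw [RCLike.real_smul_eq_coe_smul (K := ℂ)] at h2
    exact h2
  have hpos := h.dotProduct_mulVec_nonneg w
  have hcalc : star w ⬝ᵥ (((c : ℂ) • 1 - A) *ᵥ w)
      = ((c - hA.eigenvalues i : ℝ) : ℂ) := by
    rw [Matrix.sub_mulVec, dotProduct_sub, hmul, Matrix.smul_mulVec,
      Matrix.one_mulVec, dotProduct_smul, dotProduct_smul, hnorm,
      smul_eq_mul, smul_eq_mul, mul_one, mul_one, Complex.ofReal_sub]
  rw [hcalc] at hpos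
  have : (0 : ℝ) ≤ c - hA.eigenvalues i := by exact_mod_cast hpos
  linarith

/-- eigenvalue localization used in the performance analysis. -/
theorem stmt_9 (p : ℕ) (hp : 1 ≤ p) (U : ℝ) (hU : 1 ≤ U)
    (S X : Matrix (Fin p) (Fin p) ℂ)
    (hSherm : S.IsHermitian) (hSpsd : S.PosSemidef)
    (hSlow : (S - 1).PosSemidef)
    (hSup : ((U : ℂ) • (1 : Matrix (Fin p) (Fin p) ℂ) - S).PosSemidef)
    (hXherm : X.IsHermitian) (hXpd : X.PosDef)
    (hXup : ((1 : Matrix (Fin p) (Fin p) ℂ) - X).PosSemidef)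
    (Γ : Matrix (Fin p) (Fin p) ℂ)
    (hΓdef : Γ = hSpsd.sqrt * (X - S⁻¹) * hSpsd.sqrt)
    (hΓ : Γ.IsHermitian) :
    ∀ i, -1 < hΓ.eigenvalues i ∧ hΓ.eigenvalues i ≤ 2 * U := by
  intro i
  set Q : Matrix (Fin p) (Fin p) ℂ := hSpsd.sqrt with hQdef
  have hQpsd : Q.PosSemidef := hSpsd.posSemidef_sqrt
  have hQQ : Q * Q = S := hSpsd.sqrt_mul_self
  have hSpd : S.PosDef := by
    have h := Matrix.PosDef.posSemidef_add hSlow (Matrix.PosDef.one)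
    simpa using h
  -- Q is positive definite
  have hQdet : IsUnit Q.det := by
    rw [isUnit_iff_ne_zero]
    intro h
    have : S.det = 0 := by rw [← hQQ, Matrix.det_mul, h, mul_zero]
    exact hSpd.det_pos.ne' this
  have hQunit : IsUnit Q := (Matrix.isUnit_iff_isUnit_det Q).mpr hQdet
  have hQpd : Q.PosDef := by
    refine Matrix.PosDef.of_dotProduct_mulVec_pos hQpsd.isHermitian fun x hx => ?_
    refine lt_of_le_of_ne (hQpsd.dotProduct_mulVec_nonneg x) fun h => ?_
    have hQx : Q *ᵥ x = 0 := (hQpsd.dotProduct_mulVec_zero_iff x).mp h.symm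
    have hinj := (Matrix.mulVec_injective_iff_isUnit (K := ℂ)).mpr hQunit
    exact hx (hinj (by simpa using hQx))
  -- key identity: Q * S⁻¹ * Q = 1
  have hQinv : Q * S⁻¹ * Q = 1 := by
    rw [← hQQ, Matrix.mul_inv_rev]
    have h1 : Q * (Q⁻¹ * Q⁻¹) * Q = (Q * Q⁻¹) * (Q⁻¹ * Q) := by
      noncomm_ring
    rw [h1, Matrix.mul_nonsing_inv _ hQdet, Matrix.nonsing_inv_mul _ hQdet, one_mul]
  have hΓeq : Γ = Q * X * Q - 1 := by
    rw [hΓdef]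
    have : Q * (X - S⁻¹) * Q = Q * X * Q - Q * S⁻¹ * Q := by noncomm_ring
    rw [this, hQinv]
  -- lower bound : Γ + 1 is positive definite
  have hlow : (Γ + (1 : ℂ) • 1).PosDef := by
    rw [hΓeq]
    have : Q * X * Q - 1 + (1 : ℂ) • 1 = Q * X * Q := by simp
    rw [this]
    exact conj_posDef hQpd hXpd
  -- upper bound : (2U)•1 - Γ is positive semidefinite
  have hQXQ : Q * (1 - X) * Q = S - Q * X * Q := by
    rw [Matrix.mul_sub, Matrix.sub_mul, Matrix.mul_one, hQQ]
  have hup : (((2 * U : ℝ) : ℂ) • 1 - Γ).PosSemidef := by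
    have hdecomp : ((2 * U : ℝ) : ℂ) • (1 : Matrix (Fin p) (Fin p) ℂ) - Γ
        = (((U : ℂ) • 1 - S) + ((U : ℂ) • 1 + 1)) + Q * (1 - X) * Q := by
      rw [hΓeq, hQXQ]
      push_cast
      module
    rw [hdecomp]
    have hU1 : ((U : ℂ) • (1 : Matrix (Fin p) (Fin p) ℂ) + 1).PosSemidef := by
      have h1 : ((U : ℂ) • (1 : Matrix (Fin p) (Fin p) ℂ)).PosSemidef := by
        refine Matrix.PosSemidef.of_dotProduct_mulVec_nonneg (by simp [Matrix.IsHermitian, conjTranspose_smul,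
          Complex.star_def, Complex.conj_ofReal]) fun x => ?_
        rw [Matrix.smul_mulVec, Matrix.one_mulVec, dotProduct_smul]
        have h0 : (0 : ℂ) ≤ star x ⬝ᵥ x := dotProduct_star_self_nonneg x
        have hU0 : (0 : ℂ) ≤ (U : ℂ) := by
          rw [Complex.le_def]
          constructor <;> simp
          linarith
        calc (0 : ℂ) = (U : ℂ) * 0 := by ring
        _ ≤ (U : ℂ) • (star x ⬝ᵥ x) := by
            rw [smul_eq_mul]
            exact mul_le_mul_of_nonneg_left h0 hU0
      exact h1.add Matrix.PosSemidef.one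
    have hconj : (Q * (1 - X) * Q).PosSemidef := by
      have h := hXup.conjTranspose_mul_mul_same Q
      rwa [hQpsd.isHermitian.eq] at h
    exact (hSup.add hU1).add hconj
  constructor
  · have := eig_lower hΓ 1 (by simpa using hlow) i
    simpa using this
  · exact eig_upper hΓ (2 * U) hup i
end

section
/- Fix integers p ≥ 1 and F ≥ 1. Let S[1],…,S[F] be p×p Hermitian matrices with I ⪯ S[f] for all f. Then for every nonempty subset 𝒮 ⊆ [p]×[p] with |𝒮| ≤ s (s ≥ 1 an integer) and every sequence X[·] of p×p Hermitian matrices: (1/F) ∑_{f=1}^F ‖S[f]^{1/2} X[f] S[f]^{1/2}‖_F² ≥ (1/s) ‖X_𝒮‖₁². (The compatibility condition, Assumption 3, is always valid with constant φ = 1 for a process whose spectral density matrix satisfies the eigenvalue lower bound (2) with L = 1.) -/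
open Matrix
open scoped ComplexOrder

lemma trace_re_nonneg' {n : ℕ} {A : Matrix (Fin n) (Fin n) ℂ} (hA : A.PosSemidef) :
    0 ≤ A.trace.re := by
  rw [Matrix.trace]
  unfold Matrix.diag
  rw [Complex.re_sum]
  apply Finset.sum_nonneg
  intro i _
  have h := hA.diag_nonneg (i := i)
  exact (Complex.le_def.mp h).1

open scoped MatrixOrder in
lemma trace_mul_re_nonneg' {n : ℕ} {A B : Matrix (Fin n) (Fin n) ℂ}
    (hA : A.PosSemidef) (hB : B.PosSemidef) : 0 ≤ ((A * B).trace).re := by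
  have h3 : (CFC.sqrt A * B * CFC.sqrt A).trace = (A * B).trace := by
    rw [Matrix.trace_mul_cycle, CFC.sqrt_mul_sqrt_self A (Matrix.nonneg_iff_posSemidef.mpr hA)]
  have h2 : (CFC.sqrt A * B * CFC.sqrt A).PosSemidef := by
    have := hB.conjTranspose_mul_mul_same (CFC.sqrt A)
    rwa [(Matrix.nonneg_iff_posSemidef.mp (CFC.sqrt_nonneg A)).1.eq] at this
  rw [← h3]
  exact trace_re_nonneg' h2

lemma frobSq_eq_trace {n : ℕ} (M : Matrix (Fin n) (Fin n) ℂ) :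
    frobSq M = ((Mᴴ * M).trace).re := by
  rw [Matrix.trace]
  unfold Matrix.diag
  rw [Complex.re_sum, frobSq, Finset.sum_comm]
  congr 1; ext j
  rw [Matrix.mul_apply, Complex.re_sum]
  congr 1; ext i
  rw [Matrix.conjTranspose_apply]
  have h0 : star (M i j) * M i j = ((Complex.normSq (M i j) : ℝ) : ℂ) := by
    rw [Complex.normSq_eq_conj_mul_self]; rfl
  rw [h0]
  simp [Complex.normSq_eq_norm_sq, ← Complex.ofReal_pow]

open scoped MatrixOrder in
lemma key_ineq {n : ℕ} {S X : Matrix (Fin n) (Fin n) ℂ} (hS : S.PosSemidef)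
    (hSlow : (S - 1).PosSemidef) (hX : X.IsHermitian) :
    frobSq X ≤ frobSq (CFC.sqrt S * X * CFC.sqrt S) := by
  set A := CFC.sqrt S with hAdef
  have hAH : Aᴴ = A := (Matrix.nonneg_iff_posSemidef.mp (CFC.sqrt_nonneg S)).1
  have hAA : A * A = S := CFC.sqrt_mul_sqrt_self S (Matrix.nonneg_iff_posSemidef.mpr hS)
  have hXX : (X * X).PosSemidef := by
    have := Matrix.posSemidef_conjTranspose_mul_self X
    rwa [hX.eq] at this
  have hXSX : (X * S * X).PosSemidef := by
    have := hS.conjTranspose_mul_mul_same X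
    rwa [hX.eq] at this
  have e1 : frobSq X = ((X * X).trace).re := by rw [frobSq_eq_trace, hX.eq]
  have e2 : frobSq (A * X * A) = ((S * (X * S * X)).trace).re := by
    rw [frobSq_eq_trace]
    congr 1
    have hM : (A * X * A)ᴴ = A * X * A := by
      simp [Matrix.conjTranspose_mul, hAH, hX.eq, mul_assoc]
    rw [hM]
    have h5 : (A * X * A) * (A * X * A) = A * (X * S * X) * A := by
      rw [← hAA]; noncomm_ring
    rw [h5, Matrix.trace_mul_cycle, ← mul_assoc, hAA]
    congr 1
    noncomm_ring
  have exp : ∀ P : Matrix (Fin n) (Fin n) ℂ,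
      ((S - 1) * P).trace = (S * P).trace - P.trace := by
    intro P; rw [sub_mul, one_mul, Matrix.trace_sub]
  have d1 : 0 ≤ (((S - 1) * (X * X)).trace).re := trace_mul_re_nonneg' hSlow hXX
  have d2 : 0 ≤ (((S - 1) * (X * S * X)).trace).re := trace_mul_re_nonneg' hSlow hXSX
  rw [exp] at d1 d2
  simp only [Complex.sub_re, sub_nonneg] at d1 d2
  have cyc : ((S * (X * X)).trace).re = ((X * S * X).trace).re := by
    rw [Matrix.trace_mul_comm S (X * X), ← Matrix.trace_mul_cycle X S X]
  rw [e1, e2]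
  calc ((X * X).trace).re ≤ ((S * (X * X)).trace).re := d1
    _ = ((X * S * X).trace).re := cyc
    _ ≤ ((S * (X * S * X)).trace).re := d2

/-- the compatibility condition (Assumption 3) always holds with
constant φ = 1 when the SDM satisfies the eigenvalue lower bound with L = 1. -/
theorem stmt_14 (p F s : ℕ) (hp : 1 ≤ p) (hF : 1 ≤ F) (hs : 1 ≤ s)
    (S : Fin F → Matrix (Fin p) (Fin p) ℂ)
    (hSherm : ∀ f, (S f).IsHermitian)
    (hSpsd : ∀ f, (S f).PosSemidef)
    (hSlow : ∀ f, (S f - 1).PosSemidef)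
    (𝒮 : Set (Fin p × Fin p)) (h𝒮ne : 𝒮.Nonempty) (hcard : 𝒮.ncard ≤ s)
    (X : Fin F → Matrix (Fin p) (Fin p) ℂ) (hX : ∀ f, (X f).IsHermitian) :
    (1 / (s : ℝ)) * (l1Norm (restrictSeq 𝒮 X)) ^ 2 ≤
      (1 / (F : ℝ)) * ∑ f, frobSq ((open scoped MatrixOrder in CFC.sqrt (S f)) * X f *
        (open scoped MatrixOrder in CFC.sqrt (S f))) := by
  classical
  set e : Fin p × Fin p → ℝ := fun ij => entryNorm X ij.1 ij.2 with he
  set T : Finset (Fin p × Fin p) := Finset.univ.filter (· ∈ 𝒮) with hT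
  have hres : ∀ i j, entryNorm (restrictSeq 𝒮 X) i j
      = if (i, j) ∈ 𝒮 then entryNorm X i j else 0 := by
    intro i j
    by_cases h : (i, j) ∈ 𝒮
    · simp only [h, if_true, entryNorm, restrictSeq]
      congr 2
      apply Finset.sum_congr rfl
      intro f _
      simp [h]
    · simp [entryNorm, restrictSeq, h]
  have hL : l1Norm (restrictSeq 𝒮 X) = ∑ ij ∈ T, e ij := by
    rw [l1Norm, ← Fintype.sum_prod_type']
    rw [hT, Finset.sum_filter]
    apply Finset.sum_congr rfl
    intro ij _
    rw [hres ij.1 ij.2]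
  have hcardT : (T.card : ℝ) ≤ (s : ℝ) := by
    have hTt : T = 𝒮.toFinset := by
      ext ij; simp [hT]
    have : T.card = 𝒮.ncard := by rw [hTt, Set.ncard_eq_toFinset_card']
    rw [this]
    exact_mod_cast hcard
  have hEsq : ∀ ij : Fin p × Fin p,
      e ij ^ 2 = (1 / (F : ℝ)) * ∑ f, ‖X f ij.1 ij.2‖ ^ 2 := by
    intro ij
    rw [he]
    have hnn : 0 ≤ (1 / (F : ℝ)) * ∑ f, ‖X f ij.1 ij.2‖ ^ 2 := by positivity
    simp only [entryNorm]
    exact Real.sq_sqrt hnn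
  have hsum : ∑ ij : Fin p × Fin p, e ij ^ 2 = (1 / (F : ℝ)) * ∑ f, frobSq (X f) := by
    simp_rw [hEsq]
    rw [← Finset.mul_sum]
    congr 1
    rw [Finset.sum_comm]
    apply Finset.sum_congr rfl
    intro f _
    rw [frobSq, ← Fintype.sum_prod_type']
  have hCS : (∑ ij ∈ T, e ij) ^ 2 ≤ (T.card : ℝ) * ∑ ij ∈ T, e ij ^ 2 :=
    sq_sum_le_card_mul_sum_sq
  have hsub : ∑ ij ∈ T, e ij ^ 2 ≤ ∑ ij : Fin p × Fin p, e ij ^ 2 :=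
    Finset.sum_le_sum_of_subset_of_nonneg (Finset.filter_subset _ _)
      (fun _ _ _ => sq_nonneg _)
  have hfrob : (1 / (F : ℝ)) * ∑ f, frobSq (X f)
      ≤ (1 / (F : ℝ)) * ∑ f, frobSq ((open scoped MatrixOrder in CFC.sqrt (S f)) * X f *
        (open scoped MatrixOrder in CFC.sqrt (S f))) := by
    apply mul_le_mul_of_nonneg_left _ (by positivity)
    exact Finset.sum_le_sum fun f _ => key_ineq (hSpsd f) (hSlow f) (hX f)
  have hQnn : 0 ≤ ∑ ij ∈ T, e ij ^ 2 :=
    Finset.sum_nonneg fun _ _ => sq_nonneg _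
  have hspos : (0 : ℝ) < (s : ℝ) := by exact_mod_cast hs
  have h1 : (l1Norm (restrictSeq 𝒮 X)) ^ 2
      ≤ (s : ℝ) * ((1 / (F : ℝ)) * ∑ f, frobSq (X f)) := by
    rw [hL]
    calc (∑ ij ∈ T, e ij) ^ 2 ≤ (T.card : ℝ) * ∑ ij ∈ T, e ij ^ 2 := hCS
      _ ≤ (s : ℝ) * ∑ ij ∈ T, e ij ^ 2 := by
          exact mul_le_mul_of_nonneg_right hcardT hQnn
      _ ≤ (s : ℝ) * ∑ ij : Fin p × Fin p, e ij ^ 2 := by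
          exact mul_le_mul_of_nonneg_left hsub (le_of_lt hspos)
      _ = (s : ℝ) * ((1 / (F : ℝ)) * ∑ f, frobSq (X f)) := by rw [hsum]
  calc (1 / (s : ℝ)) * (l1Norm (restrictSeq 𝒮 X)) ^ 2
      ≤ (1 / (s : ℝ)) * ((s : ℝ) * ((1 / (F : ℝ)) * ∑ f, frobSq (X f))) := by
        exact mul_le_mul_of_nonneg_left h1 (by positivity)
    _ = (1 / (F : ℝ)) * ∑ f, frobSq (X f) := by
        field_simp
    _ ≤ (1 / (F : ℝ)) * ∑ f, frobSq ((open scoped MatrixOrder in CFC.sqrt (S f)) * X f *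
        (open scoped MatrixOrder in CFC.sqrt (S f))) := hfrob
end
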